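/- arXiv:1709.07414 — 6 statements merged into one kernel-verified Lean document; each statement's English description precedes it below -/
import Mathlib

section
/- Let G be a circularly connected bidirected graph, let α ∈ {+, −}, and let s be a vertex of G. Then for every vertex t of G there exists a sign β ∈ {+, −} such that G has an (α, β)-ditrail from s to t. -/
/-- A bidirected graph on vertex type `V` with edge type `E`: each edge `e` has two
designated ends, `fst e` and `snd e`, and each end carries a sign
(`true` = `+`, `false` = `-`). -/
structure BidirGraph (V : Type*) (E : Type*) where
  fst : E → V
  snd : E → V
  sgnFst : E → Bool
  sgnSnd : E → Bool

namespace BidirGraph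

variable {V E : Type*} (G : BidirGraph V E)

/-- A step is an edge together with a direction of traversal
(`true` = from `fst` to `snd`). -/
def stepTail (s : E × Bool) : V := if s.2 then G.fst s.1 else G.snd s.1

def stepHead (s : E × Bool) : V := if s.2 then G.snd s.1 else G.fst s.1

/-- The sign of the start vertex of a step over its edge. -/
def stepTailSign (s : E × Bool) : Bool := if s.2 then G.sgnFst s.1 else G.sgnSnd s.1

/-- The sign of the end vertex of a step over its edge. -/
def stepHeadSign (s : E × Bool) : Bool := if s.2 then G.sgnSnd s.1 else G.sgnFst s.1

/-- `L` is a walk from `u` to `v`. -/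
def IsWalk (u v : V) (L : List (E × Bool)) : Prop :=
  List.Chain' (fun s t => G.stepHead s = G.stepTail t) L ∧
  (L = [] → u = v) ∧
  (∀ s, L.head? = some s → G.stepTail s = u) ∧
  (∀ s, L.getLast? = some s → G.stepHead s = v)

/-- A ditrail: a walk with pairwise distinct edges in which, at every internal vertex,
the signs over the preceding and the succeeding edges are distinct. -/
def IsDitrail (u v : V) (L : List (E × Bool)) : Prop :=
  G.IsWalk u v L ∧ (L.map Prod.fst).Nodup ∧
  List.Chain' (fun s t => G.stepHeadSign s ≠ G.stepTailSign t) L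

/-- An `(α, β)`-ditrail from `u` to `v`: a ditrail with at least one edge that starts
with sign `α` and ends with sign `β`; a trivial (edgeless) ditrail counts as an
`(α, β)`-ditrail whenever `α ≠ β`. -/
def IsABDitrail (α β : Bool) (u v : V) (L : List (E × Bool)) : Prop :=
  G.IsDitrail u v L ∧
  ((L = [] ∧ α ≠ β) ∨
   (L ≠ [] ∧ (∀ s, L.head? = some s → G.stepTailSign s = α) ∧
    (∀ s, L.getLast? = some s → G.stepHeadSign s = β)))

/-- An edge is circular if some cyclic ditrail (a closed `(α, -α)`-ditrail) contains it. -/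
def IsCircular (e : E) : Prop :=
  ∃ (v : V) (α : Bool) (L : List (E × Bool)),
    G.IsABDitrail α (!α) v v L ∧ ∃ d : Bool, (e, d) ∈ L

/-- Two vertices are circularly connected if some path (a walk without repeated
vertices) between them uses only circular edges. -/
def CircConn (u v : V) : Prop :=
  ∃ L : List (E × Bool), G.IsWalk u v L ∧ (u :: L.map G.stepHead).Nodup ∧
    ∀ p ∈ L, G.IsCircular p.1

/-- A bidirected graph is circularly connected if every two vertices are
circularly connected. -/
def CircularlyConnected : Prop := ∀ u v : V, G.CircConn u v

/-- The vertex set of a circular component: an equivalence class of circular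
connectivity. -/
def IsCircComponent (C : Set V) : Prop := ∃ v : V, C = {u | G.CircConn u v}

/-- The relation `∼_α`: `u ∼_α v` iff `u = v`, or `u` and `v` are circularly connected
and there is no `(α, α)`-ditrail between them. -/
def SimRel (α : Bool) (u v : V) : Prop :=
  u = v ∨ (G.CircConn u v ∧
    ¬ ∃ L : List (E × Bool), G.IsABDitrail α α u v L ∨ G.IsABDitrail α α v u L)

/-- A bidirected graph is digraphic if for every edge the two ends carry distinct
signs, i.e., exactly one end has sign `+` and the other has sign `-`. -/
def IsDigraphic : Prop := ∀ e : E, G.sgnFst e ≠ G.sgnSnd e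

/-- A dipath: a ditrail in which no vertex occurs more than once. -/
def IsDipath (u v : V) (L : List (E × Bool)) : Prop :=
  G.IsDitrail u v L ∧ (u :: L.map G.stepHead).Nodup

/-- Two vertices of a digraphic bidirected graph are strongly connected if there are
`(-, +)`-ditrails from `u` to `v` and from `v` to `u`. -/
def StronglyConn (u v : V) : Prop :=
  (∃ L, G.IsABDitrail false true u v L) ∧ (∃ L, G.IsABDitrail false true v u L)

end BidirGraph
namespace BidirGraph

variable {V E : Type*} (G : BidirGraph V E)

/-- Reverse a step. -/
def sflip (s : E × Bool) : E × Bool := (s.1, !s.2)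

@[simp] lemma stepTail_sflip (s : E × Bool) : G.stepTail (sflip s) = G.stepHead s := by
  cases s with | mk e d => cases d <;> simp [sflip, stepTail, stepHead]

@[simp] lemma stepHead_sflip (s : E × Bool) : G.stepHead (sflip s) = G.stepTail s := by
  cases s with | mk e d => cases d <;> simp [sflip, stepTail, stepHead]

@[simp] lemma stepTailSign_sflip (s : E × Bool) : G.stepTailSign (sflip s) = G.stepHeadSign s := by
  cases s with | mk e d => cases d <;> simp [sflip, stepTailSign, stepHeadSign]

@[simp] lemma stepHeadSign_sflip (s : E × Bool) : G.stepHeadSign (sflip s) = G.stepTailSign s := by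
  cases s with | mk e d => cases d <;> simp [sflip, stepTailSign, stepHeadSign]

variable {G}

lemma isWalk_nil {u v : V} : G.IsWalk u v ([] : List (E × Bool)) ↔ u = v := by
  simp [IsWalk, List.Chain']

lemma isWalk_cons {u v : V} {s : E × Bool} {L : List (E × Bool)} :
    G.IsWalk u v (s :: L) ↔ G.stepTail s = u ∧ G.IsWalk (G.stepHead s) v L := by
  cases L with
  | nil => simp [IsWalk, List.Chain']
  | cons t L =>
    simp only [IsWalk, List.Chain', List.isChain_cons_cons, List.head?_cons, List.getLast?_cons_cons]
    constructor
    · rintro ⟨⟨h1, h2⟩, -, h3, h4⟩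
      exact ⟨h3 s rfl, h2, by simp, fun q hq => by simp at hq; subst hq; exact h1.symm, h4⟩
    · rintro ⟨h0, h2, -, h3, h4⟩
      exact ⟨⟨(h3 t rfl).symm, h2⟩, by simp, fun q hq => by simp at hq; subst hq; exact h0, h4⟩

lemma isWalk_append {u v : V} {L1 L2 : List (E × Bool)} :
    G.IsWalk u v (L1 ++ L2) ↔ ∃ x, G.IsWalk u x L1 ∧ G.IsWalk x v L2 := by
  induction L1 generalizing u with
  | nil =>
    simp only [List.nil_append]
    constructor
    · exact fun h => ⟨u, isWalk_nil.mpr rfl, h⟩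
    · rintro ⟨x, hx, h⟩; rwa [isWalk_nil.mp hx]
  | cons s L1 ih =>
    simp only [List.cons_append, isWalk_cons, ih]
    tauto

end BidirGraph
namespace BidirGraph

variable {V E : Type*} {G : BidirGraph V E}

lemma isWalk_singleton {u v : V} {s : E × Bool} :
    G.IsWalk u v [s] ↔ G.stepTail s = u ∧ G.stepHead s = v := by
  rw [show [s] = s :: ([] : List (E × Bool)) from rfl, isWalk_cons, isWalk_nil]

lemma isDitrail_append {u x v : V} {L1 L2 : List (E × Bool)}
    (h1 : G.IsDitrail u x L1) (h2 : G.IsDitrail x v L2)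
    (hd : ∀ f ∈ L1.map Prod.fst, f ∉ L2.map Prod.fst)
    (hsgn : ∀ p ∈ L1.getLast?, ∀ q ∈ L2.head?, G.stepHeadSign p ≠ G.stepTailSign q) :
    G.IsDitrail u v (L1 ++ L2) := by
  obtain ⟨hw1, hn1, hc1⟩ := h1
  obtain ⟨hw2, hn2, hc2⟩ := h2
  refine ⟨isWalk_append.mpr ⟨x, hw1, hw2⟩, ?_, ?_⟩
  · rw [List.map_append, List.nodup_append]
    exact ⟨hn1, hn2, fun a ha b hb hab => hd a ha (hab ▸ hb)⟩
  · exact List.isChain_append.mpr ⟨hc1, hc2, hsgn⟩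

lemma isDitrail_split {u v : V} {L1 L2 : List (E × Bool)}
    (h : G.IsDitrail u v (L1 ++ L2)) :
    ∃ x, G.IsDitrail u x L1 ∧ G.IsDitrail x v L2 := by
  obtain ⟨hw, hn, hc⟩ := h
  obtain ⟨x, hw1, hw2⟩ := isWalk_append.mp hw
  rw [List.map_append, List.nodup_append] at hn
  simp only [List.Chain', List.isChain_append] at hc
  exact ⟨x, ⟨hw1, hn.1, hc.1⟩, ⟨hw2, hn.2.1, hc.2.1⟩⟩

/-- A prefix of an `(α, β)`-ditrail is an `(α, β')`-ditrail for a suitable `β'`. -/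
lemma abDitrail_prefix {α β : Bool} {u v : V} {L1 L2 : List (E × Bool)}
    (h : G.IsABDitrail α β u v (L1 ++ L2)) :
    ∃ x β', G.IsABDitrail α β' u x L1 ∧ G.IsWalk x v L2 := by
  obtain ⟨hd, hab⟩ := h
  obtain ⟨x, hd1, hd2⟩ := isDitrail_split hd
  rcases eq_or_ne L1 [] with rfl | hne
  · exact ⟨x, !α, ⟨hd1, Or.inl ⟨rfl, by simp⟩⟩, hd2.1⟩
  · obtain ⟨q, hq⟩ : ∃ q, L1.getLast? = some q :=
      ⟨L1.getLast hne, List.getLast?_eq_getLast hne⟩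
    refine ⟨x, G.stepHeadSign q, ⟨hd1, Or.inr ⟨hne, ?_, ?_⟩⟩, hd2.1⟩
    · intro p hp
      rcases hab with ⟨habe, -⟩ | ⟨-, hh, -⟩
      · exact absurd habe (by simp [hne])
      · exact hh p (by rwa [List.head?_append_of_ne_nil _ hne])
    · intro p hp
      rw [hq] at hp
      simp_all

/-- Splicing an `(α, β)`-ditrail with a `(!β, β₂)`-ditrail. -/
lemma abDitrail_append {α β β2 : Bool} {u x v : V} {L1 L2 : List (E × Bool)}
    (h1 : G.IsABDitrail α β u x L1) (h2 : G.IsABDitrail (!β) β2 x v L2) (hL2 : L2 ≠ [])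
    (hd : ∀ f ∈ L1.map Prod.fst, f ∉ L2.map Prod.fst) :
    G.IsABDitrail α β2 u v (L1 ++ L2) := by
  obtain ⟨hd1, hab1⟩ := h1
  obtain ⟨hd2, hab2⟩ := h2
  rcases hab2 with ⟨h, -⟩ | ⟨-, hh2, hl2⟩
  · exact absurd h hL2
  rcases hab1 with ⟨rfl, hne⟩ | ⟨hne1, hh1, hl1⟩
  · have hux : u = x := hd1.1.2.1 rfl
    subst hux
    refine ⟨by simpa using hd2, Or.inr ⟨by simpa using hL2, ?_, ?_⟩⟩
    · intro p hp
      have := hh2 p (by simpa using hp)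
      simp only [this]
      cases α <;> cases β <;> simp_all
    · intro p hp
      exact hl2 p (by simpa using hp)
  · refine ⟨isDitrail_append hd1 hd2 hd ?_, Or.inr ⟨by simp [hne1], ?_, ?_⟩⟩
    · intro p hp q hq
      rw [hl1 p hp, hh2 q hq]
      simp
    · intro p hp
      rw [List.head?_append_of_ne_nil _ hne1] at hp
      exact hh1 p hp
    · intro p hp
      rw [List.getLast?_append_of_ne_nil _ hL2] at hp
      exact hl2 p hp

end BidirGraph
namespace BidirGraph

variable {V E : Type*} {G : BidirGraph V E}

/-- Reversal of a walk. -/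
def wrev (L : List (E × Bool)) : List (E × Bool) := (L.map sflip).reverse

@[simp] lemma wrev_nil : (wrev ([] : List (E × Bool))) = [] := rfl

lemma wrev_cons (s : E × Bool) (L : List (E × Bool)) :
    wrev (s :: L) = wrev L ++ [sflip s] := by simp [wrev]

@[simp] lemma wrev_map_fst (L : List (E × Bool)) :
    (wrev L).map Prod.fst = (L.map Prod.fst).reverse := by
  simp [wrev, List.map_reverse, List.map_map, sflip, Function.comp]

@[simp] lemma wrev_eq_nil_iff (L : List (E × Bool)) : wrev L = [] ↔ L = [] := by
  simp [wrev]

@[simp] lemma head?_wrev (L : List (E × Bool)) :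
    (wrev L).head? = L.getLast?.map sflip := by
  rw [wrev, List.head?_reverse, (List.getLast?_map).symm]

@[simp] lemma getLast?_wrev (L : List (E × Bool)) :
    (wrev L).getLast? = L.head?.map sflip := by
  rw [wrev, List.getLast?_reverse, List.head?_map]

lemma isWalk_wrev {u v : V} {L : List (E × Bool)} (h : G.IsWalk u v L) :
    G.IsWalk v u (wrev L) := by
  induction L generalizing u with
  | nil => rw [isWalk_nil] at h; subst h; exact isWalk_nil.mpr rfl
  | cons s L ih =>
    rw [isWalk_cons] at h
    rw [wrev_cons]
    exact isWalk_append.mpr ⟨G.stepHead s, ih h.2,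
      isWalk_singleton.mpr ⟨by simp, by simp [h.1]⟩⟩

lemma isDitrail_wrev {u v : V} {L : List (E × Bool)} (h : G.IsDitrail u v L) :
    G.IsDitrail v u (wrev L) := by
  obtain ⟨hw, hn, hc⟩ := h
  refine ⟨isWalk_wrev hw, by simpa using hn, ?_⟩
  simp only [wrev, List.Chain', List.isChain_reverse, List.isChain_map]
  exact List.IsChain.imp (fun a b hab => by simp [Function.flip_def, Ne, eq_comm]; exact hab) hc

lemma abDitrail_wrev {α β : Bool} {u v : V} {L : List (E × Bool)}
    (h : G.IsABDitrail α β u v L) : G.IsABDitrail β α v u (wrev L) := by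
  obtain ⟨hd, hab⟩ := h
  refine ⟨isDitrail_wrev hd, ?_⟩
  rcases hab with ⟨rfl, hne⟩ | ⟨hne, hh, hl⟩
  · exact Or.inl ⟨rfl, Ne.symm hne⟩
  · refine Or.inr ⟨by simpa using hne, ?_, ?_⟩
    · intro p hp
      rw [head?_wrev] at hp
      obtain ⟨q, hq, rfl⟩ := Option.map_eq_some_iff.mp hp
      simp [hl q hq]
    · intro p hp
      rw [getLast?_wrev] at hp
      obtain ⟨q, hq, rfl⟩ := Option.map_eq_some_iff.mp hp
      simp [hh q hq]

end BidirGraph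
namespace BidirGraph

variable {V E : Type*} {G : BidirGraph V E}

/-- `x` lies on the walk `L` which starts at `w`. -/
def On (G : BidirGraph V E) (w : V) (L : List (E × Bool)) (x : V) : Prop :=
  x = w ∨ ∃ p ∈ L, G.stepHead p = x

lemma on_tail {w w' x : V} {C : List (E × Bool)} {p : E × Bool}
    (hw : G.IsWalk w w' C) (hp : p ∈ C) (hx : G.stepTail p = x) : On G w C x := by
  obtain ⟨L1, L2, rfl⟩ := List.append_of_mem hp
  obtain ⟨y, h1, h2⟩ := isWalk_append.mp hw
  rw [isWalk_cons] at h2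
  rcases eq_or_ne L1 [] with rfl | hne
  · exact Or.inl ((hx.symm.trans h2.1).trans (isWalk_nil.mp h1).symm)
  · refine Or.inr ⟨L1.getLast hne, List.mem_append_left _ (List.getLast_mem hne), ?_⟩
    rw [h1.2.2.2 _ (List.getLast?_eq_getLast hne), ← h2.1, hx]

lemma on_end {w w' x : V} {C : List (E × Bool)} {f : E}
    (hw : G.IsWalk w w' C) (hf : f ∈ C.map Prod.fst) (hx : x = G.fst f ∨ x = G.snd f) :
    On G w C x := by
  obtain ⟨p, hp, rfl⟩ := List.mem_map.mp hf
  have : x = G.stepTail p ∨ x = G.stepHead p := by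
    cases hb : p.2 <;> simp [stepTail, stepHead, hb] <;> tauto
  rcases this with rfl | rfl
  · exact on_tail hw hp rfl
  · exact Or.inr ⟨p, hp, rfl⟩

lemma on_split {w w' x : V} {C : List (E × Bool)}
    (hw : G.IsWalk w w' C) (hx : On G w C x) :
    ∃ P Q, C = P ++ Q ∧ G.IsWalk w x P ∧ G.IsWalk x w' Q := by
  rcases hx with rfl | ⟨p, hp, hhead⟩
  · exact ⟨[], C, rfl, isWalk_nil.mpr rfl, hw⟩
  · obtain ⟨L1, L2, rfl⟩ := List.append_of_mem hp
    obtain ⟨y, h1, h2⟩ := isWalk_append.mp hw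
    rw [isWalk_cons] at h2
    refine ⟨L1 ++ [p], L2, by simp, ?_, hhead ▸ h2.2⟩
    exact isWalk_append.mpr ⟨y, h1, isWalk_singleton.mpr ⟨h2.1, hhead⟩⟩

lemma exists_head? {X : Type*} {L : List X} (h : L ≠ []) : ∃ q, L.head? = some q :=
  ⟨L.head h, List.head?_eq_head h⟩

lemma exists_getLast? {X : Type*} {L : List X} (h : L ≠ []) : ∃ q, L.getLast? = some q :=
  ⟨L.getLast h, List.getLast?_eq_getLast h⟩

/-- Rotating a cyclic ditrail. -/
lemma rotate {γ : Bool} {w x : V} {P Q : List (E × Bool)}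
    (h : G.IsABDitrail γ (!γ) w w (P ++ Q))
    (hP : G.IsWalk w x P) (hQ : G.IsWalk x w Q) :
    ∃ δ, G.IsABDitrail δ (!δ) x x (Q ++ P) := by
  rcases eq_or_ne P [] with rfl | hPne
  · rw [isWalk_nil] at hP
    subst hP
    exact ⟨γ, by simpa using h⟩
  rcases eq_or_ne Q [] with rfl | hQne
  · rw [isWalk_nil] at hQ
    subst hQ
    exact ⟨γ, by simpa using h⟩
  obtain ⟨hd, hab⟩ := h
  rcases hab with ⟨habe, -⟩ | ⟨-, hh, hl⟩
  · exact absurd habe (by simp [hPne])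
  obtain ⟨x', hdP, hdQ⟩ := isDitrail_split hd
  -- x' = x
  obtain ⟨qP, hqP⟩ := exists_getLast? hPne
  have hx' : x' = x := by
    rw [← hdP.1.2.2.2 qP hqP, ← hP.2.2.2 qP hqP]
  subst hx'
  obtain ⟨q0, hq0⟩ := exists_head? hQne
  obtain ⟨p0, hp0⟩ := exists_head? hPne
  obtain ⟨qL, hqL⟩ := exists_getLast? hQne
  refine ⟨G.stepTailSign q0, ⟨?_, Or.inr ⟨by simp [hQne], ?_, ?_⟩⟩⟩
  · -- ditrail Q ++ P
    have hdisj : ∀ f ∈ Q.map Prod.fst, f ∉ P.map Prod.fst := by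
      have := hd.2.1
      rw [List.map_append, List.nodup_append] at this
      exact fun f hf hf' => this.2.2 f hf' f hf rfl
    refine isDitrail_append hdQ hdP hdisj ?_
    intro p hp q hq
    rw [hqL] at hp
    rw [hp0] at hq
    rw [← Option.some_inj.mp hp, ← Option.some_inj.mp hq]
    have h1 : G.stepHeadSign qL = !γ := hl qL (by rwa [List.getLast?_append_of_ne_nil _ hQne])
    have h2 : G.stepTailSign p0 = γ := hh p0 (by rwa [List.head?_append_of_ne_nil _ hPne])
    rw [h1, h2]
    simp
  · intro p hp
    rw [List.head?_append_of_ne_nil _ hQne, hq0] at hp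
    cases hp; rfl
  · intro p hp
    rw [List.getLast?_append_of_ne_nil _ hPne, hqP] at hp
    cases hp
    -- headSign of last of P = ! tailSign of head of Q, from the sign chain of P ++ Q
    have hc := hd.2.2
    simp only [List.Chain', List.isChain_append] at hc
    have := hc.2.2 qP hqP q0 hq0
    cases hβ : G.stepTailSign q0 <;> cases hβ' : G.stepHeadSign qP <;> simp_all

/-- Any vertex on a cyclic ditrail carries a cyclic ditrail with prescribed
starting sign using the same edges. -/
lemma cyclic_rotate {γ : Bool} {w x : V} {C : List (E × Bool)}
    (h : G.IsABDitrail γ (!γ) w w C) (hx : On G w C x) (δ : Bool) :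
    ∃ C', G.IsABDitrail δ (!δ) x x C' ∧
      ∀ f, f ∈ C'.map Prod.fst ↔ f ∈ C.map Prod.fst := by
  obtain ⟨P, Q, rfl, hP, hQ⟩ := on_split h.1.1 hx
  obtain ⟨δ0, h'⟩ := rotate h hP hQ
  have hedges : ∀ f, f ∈ (Q ++ P).map Prod.fst ↔ f ∈ (P ++ Q).map Prod.fst := by
    intro f; simp [List.mem_append]; tauto
  rcases eq_or_ne δ0 δ with rfl | hne
  · exact ⟨Q ++ P, h', hedges⟩
  · refine ⟨wrev (Q ++ P), ?_, fun f => by rw [wrev_map_fst, List.mem_reverse]; exact hedges f⟩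
    have := abDitrail_wrev h'
    obtain rfl : δ = !δ0 := by cases δ0 <;> cases δ <;> simp_all
    simpa using this

end BidirGraph
namespace BidirGraph

variable {V E : Type*} {G : BidirGraph V E}

lemma tail_end (p : E × Bool) : G.stepTail p = G.fst p.1 ∨ G.stepTail p = G.snd p.1 := by
  cases hb : p.2 <;> simp [stepTail, hb]

lemma head_end (p : E × Bool) : G.stepHead p = G.fst p.1 ∨ G.stepHead p = G.snd p.1 := by
  cases hb : p.2 <;> simp [stepHead, hb]

/-- Splicing a ditrail reaching `x` with an edge-disjoint cyclic ditrail at `x`. -/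
lemma splice {α β : Bool} {s x v : V} {T C' : List (E × Bool)}
    (hT : G.IsABDitrail α β s x T)
    (hC : G.IsABDitrail (!β) (!(!β)) x x C')
    (hdisj : ∀ f ∈ T.map Prod.fst, f ∉ C'.map Prod.fst)
    (hv : On G x C' v) :
    ∃ β' L, G.IsABDitrail α β' s v L := by
  rcases hv with rfl | ⟨p, hp, hhead⟩
  · exact ⟨β, T, hT⟩
  · obtain ⟨L1, L2, rfl⟩ := List.append_of_mem hp
    rw [show L1 ++ p :: L2 = (L1 ++ [p]) ++ L2 by simp] at hC hdisj
    obtain ⟨y, β', hpre, -⟩ := abDitrail_prefix hC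
    have hy : y = v := by
      rw [← hpre.1.1.2.2.2 p (by simp [List.getLast?_concat]), hhead]
    subst hy
    refine ⟨β', T ++ (L1 ++ [p]), abDitrail_append hT hpre (by simp) ?_⟩
    intro f hf hf'
    exact hdisj f hf (by simp at hf' ⊢; tauto)

/-- Reaching any vertex of a cyclic ditrail, assuming the given ditrail is
edge-disjoint from it. -/
lemma reach_disjoint {α β γ : Bool} {s w x : V} {C T : List (E × Bool)}
    (hC : G.IsABDitrail γ (!γ) w w C)
    (hT : G.IsABDitrail α β s x T)
    (hdisj : ∀ f ∈ T.map Prod.fst, f ∉ C.map Prod.fst)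
    (hx : On G w C x) {v : V} (hv : On G w C v) :
    ∃ β' L, G.IsABDitrail α β' s v L := by
  rcases eq_or_ne v x with rfl | hvx
  · exact ⟨β, T, hT⟩
  have hCne : C ≠ [] := by
    rintro rfl
    rcases hx with rfl | ⟨p, hp, -⟩
    · rcases hv with rfl | ⟨p, hp, -⟩
      · exact hvx rfl
      · simp at hp
    · simp at hp
  obtain ⟨C', hC', hCE⟩ := cyclic_rotate hC hx (!β)
  have hv' : On G x C' v := by
    obtain ⟨f, hfC, hend⟩ : ∃ f ∈ C.map Prod.fst, v = G.fst f ∨ v = G.snd f := by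
      rcases hv with rfl | ⟨p, hp, rfl⟩
      · obtain ⟨p₁, hp₁⟩ := exists_head? hCne
        refine ⟨p₁.1, List.mem_map.mpr ⟨p₁, List.mem_of_mem_head? hp₁, rfl⟩, ?_⟩
        rw [← hC.1.1.2.2.1 p₁ hp₁]
        exact tail_end p₁
      · exact ⟨p.1, List.mem_map.mpr ⟨p, hp, rfl⟩, head_end p⟩
    exact on_end hC'.1.1 ((hCE f).mpr hfC) hend
  exact splice hT hC' (fun f hf hf' => hdisj f hf ((hCE f).mp hf')) hv'

lemma reach_on_cycle {α γ : Bool} {s w : V} {C : List (E × Bool)}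
    (hC : G.IsABDitrail γ (!γ) w w C) :
    ∀ (n : ℕ) (T : List (E × Bool)) (β : Bool) (x : V), T.length ≤ n →
      G.IsABDitrail α β s x T → On G w C x →
      ∀ v, On G w C v → ∃ β' L, G.IsABDitrail α β' s v L := by
  intro n
  induction n with
  | zero =>
    intro T β x hlen hT hx v hv
    have hTnil : T = [] := List.eq_nil_of_length_eq_zero (Nat.le_zero.mp hlen)
    subst hTnil
    exact reach_disjoint hC hT (by simp) hx hv
  | succ n ih =>
    intro T β x hlen hT hx v hv
    by_cases hdisj : ∀ f ∈ T.map Prod.fst, f ∉ C.map Prod.fst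
    · exact reach_disjoint hC hT hdisj hx hv
    · push_neg at hdisj
      obtain ⟨f, hfT, hfC⟩ := hdisj
      obtain ⟨p, hpT, rfl⟩ := List.mem_map.mp hfT
      obtain ⟨T1, T2, rfl⟩ := List.append_of_mem hpT
      obtain ⟨y, β1, hpre, hwrest⟩ := abDitrail_prefix hT
      have hyOn : On G w C y := by
        rw [isWalk_cons] at hwrest
        refine on_end hC.1.1 hfC ?_
        rw [← hwrest.1]
        exact tail_end p
      refine ih T1 β1 y ?_ hpre hyOn v hv
      have := hlen
      simp only [List.length_append, List.length_cons] at this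
      omega

/-- Extending reachability along a walk of circular edges. -/
lemma walk_reach {α : Bool} {s : V} :
    ∀ (L : List (E × Bool)) (x t : V), G.IsWalk x t L → (∀ p ∈ L, G.IsCircular p.1) →
      (∃ β T, G.IsABDitrail α β s x T) → ∃ β T, G.IsABDitrail α β s t T := by
  intro L
  induction L with
  | nil =>
    intro x t hw _ h
    rwa [isWalk_nil.mp hw] at h
  | cons p L ih =>
    intro x t hw hcirc h
    rw [isWalk_cons] at hw
    obtain ⟨w, γ, C, hC, d, hdC⟩ := hcirc p (List.mem_cons_self)
    have hfC : p.1 ∈ C.map Prod.fst := List.mem_map.mpr ⟨(p.1, d), hdC, rfl⟩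
    have hxOn : On G w C x := on_end hC.1.1 hfC (by rw [← hw.1]; exact tail_end p)
    have hhOn : On G w C (G.stepHead p) := on_end hC.1.1 hfC (head_end p)
    obtain ⟨β, T, hT⟩ := h
    obtain ⟨β', L', h'⟩ := reach_on_cycle hC T.length T β x le_rfl hT hxOn _ hhOn
    exact ih (G.stepHead p) t hw.2 (fun q hq => hcirc q (List.mem_cons_of_mem _ hq)) ⟨β', L', h'⟩

end BidirGraph


/-- Let `G` be a circularly connected bidirected graph, `α` a sign and
`s` a vertex. Then for every vertex `t` there is a sign `β` such that `G` has an
`(α, β)`-ditrail from `s` to `t`. -/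
theorem circularlyConnected_exists_ditrail {V E : Type*} (G : BidirGraph V E)
    (hG : G.CircularlyConnected) (α : Bool) (s t : V) :
    ∃ (β : Bool) (L : List (E × Bool)), G.IsABDitrail α β s t L := by
  obtain ⟨L, hw, -, hcirc⟩ := hG s t
  refine BidirGraph.walk_reach L s t hw hcirc ⟨!α, [], ?_⟩
  exact ⟨⟨BidirGraph.isWalk_nil.mpr rfl, by simp, by simp [List.Chain']⟩, Or.inl ⟨rfl, by simp⟩⟩
end

section
/- Let G be a digraphic bidirected graph and let u and v be vertices joined by an edge e. Then e is circular if and only if u and v are strongly connected, i.e., there are (−, +)-ditrails both from u to v and from v to u. -/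
namespace BidirAux

open BidirGraph

variable {V E : Type*} {G : BidirGraph V E}

lemma headSign_eq (hG : G.IsDigraphic) (s : E × Bool) :
    G.stepHeadSign s = !G.stepTailSign s := by
  obtain ⟨e, d⟩ := s
  have := hG e
  cases d <;> cases h1 : G.sgnFst e <;> cases h2 : G.sgnSnd e <;>
    simp_all [BidirGraph.stepHeadSign, BidirGraph.stepTailSign]

lemma isWalk_nil (u : V) : G.IsWalk u u [] :=
  ⟨List.isChain_nil, fun _ => rfl, by simp, by simp⟩

lemma isWalk_cons {u w : V} {s : E × Bool} {B : List (E × Bool)}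
    (h : G.IsWalk u w (s :: B)) : u = G.stepTail s ∧ G.IsWalk (G.stepHead s) w B := by
  obtain ⟨hc, -, hh, hl⟩ := h
  refine ⟨(hh s rfl).symm, ?_, ?_, ?_, ?_⟩
  · exact hc.tail
  · intro hB; subst hB; exact hl s rfl
  · intro t ht
    cases B with
    | nil => simp at ht
    | cons b B' =>
      simp only [List.head?_cons, Option.some.injEq] at ht
      subst ht
      exact ((List.isChain_cons_cons).mp hc).1.symm
  · intro t ht
    cases B with
    | nil => simp at ht
    | cons b B' =>
      exact hl t (by rwa [List.getLast?_cons_cons])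

lemma isWalk_cons' {w : V} {s : E × Bool} {B : List (E × Bool)}
    (h : G.IsWalk (G.stepHead s) w B) : G.IsWalk (G.stepTail s) w (s :: B) := by
  obtain ⟨hc, hn, hh, hl⟩ := h
  refine ⟨?_, by simp, by simp, ?_⟩
  · cases B with
    | nil => exact List.isChain_singleton _
    | cons b B' =>
      refine List.isChain_cons_cons.mpr ?_
      exact ⟨(hh b rfl).symm, hc⟩
  · intro t ht
    cases B with
    | nil =>
      simp only [List.getLast?_singleton, Option.some.injEq] at ht
      subst ht; exact (hn rfl).symm ▸ rfl
    | cons b B' =>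
      exact hl t (by rwa [List.getLast?_cons_cons] at ht)

lemma isWalk_append {u v w : V} {A B : List (E × Bool)}
    (h1 : G.IsWalk u v A) (h2 : G.IsWalk v w B) : G.IsWalk u w (A ++ B) := by
  induction A generalizing u with
  | nil => have := h1.2.1 rfl; subst this; simpa using h2
  | cons s A ih =>
    obtain ⟨rfl, h⟩ := isWalk_cons h1
    exact isWalk_cons' (ih h)

lemma isWalk_split {u w : V} {A B : List (E × Bool)}
    (h : G.IsWalk u w (A ++ B)) : ∃ m, G.IsWalk u m A ∧ G.IsWalk m w B := by
  induction A generalizing u with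
  | nil => exact ⟨u, isWalk_nil u, by simpa using h⟩
  | cons s A ih =>
    obtain ⟨rfl, h'⟩ := isWalk_cons (by simpa using h)
    obtain ⟨m, h1, h2⟩ := ih h'
    exact ⟨m, isWalk_cons' h1, h2⟩

lemma isWalk_single (s : E × Bool) : G.IsWalk (G.stepTail s) (G.stepHead s) [s] :=
  isWalk_cons' (isWalk_nil _)

def srev (s : E × Bool) : E × Bool := (s.1, !s.2)

lemma stepTail_srev (s : E × Bool) : G.stepTail (srev s) = G.stepHead s := by
  obtain ⟨e, d⟩ := s; cases d <;> simp [srev, BidirGraph.stepTail, BidirGraph.stepHead]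

lemma stepHead_srev (s : E × Bool) : G.stepHead (srev s) = G.stepTail s := by
  obtain ⟨e, d⟩ := s; cases d <;> simp [srev, BidirGraph.stepTail, BidirGraph.stepHead]

lemma stepTailSign_srev (s : E × Bool) : G.stepTailSign (srev s) = G.stepHeadSign s := by
  obtain ⟨e, d⟩ := s; cases d <;> simp [srev, BidirGraph.stepTailSign, BidirGraph.stepHeadSign]

lemma isWalk_reverse {u v : V} {L : List (E × Bool)} (h : G.IsWalk u v L) :
    G.IsWalk v u ((L.map srev).reverse) := by
  induction L generalizing u with
  | nil => have := h.2.1 rfl; subst this; simpa using isWalk_nil (G := G) u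
  | cons s L ih =>
    obtain ⟨rfl, h'⟩ := isWalk_cons h
    simp only [List.map_cons, List.reverse_cons]
    have h1 : G.IsWalk (G.stepTail (srev s)) (G.stepHead (srev s)) [srev s] := isWalk_single _
    rw [stepTail_srev, stepHead_srev] at h1
    exact isWalk_append (ih h') h1

/-- A directed walk: all steps traversed from the `-` end to the `+` end, distinct edges. -/
def DWalk (G : BidirGraph V E) (u v : V) (L : List (E × Bool)) : Prop :=
  G.IsWalk u v L ∧ (L.map Prod.fst).Nodup ∧ ∀ s ∈ L, G.stepTailSign s = false

lemma sign_chain (hG : G.IsDigraphic) (b : Bool) :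
    ∀ L : List (E × Bool), List.Chain' (fun s t => G.stepHeadSign s ≠ G.stepTailSign t) L →
      ∀ a, L.head? = some a → G.stepTailSign a = b → ∀ t ∈ L, G.stepTailSign t = b := by
  intro L
  induction L with
  | nil => simp
  | cons s L ih =>
    intro hc a ha hs t ht
    simp only [List.head?_cons, Option.some.injEq] at ha
    subst ha
    rcases List.mem_cons.mp ht with rfl | ht'
    · exact hs
    · cases L with
      | nil => simp at ht'
      | cons c L' =>
        have hrel := ((List.isChain_cons_cons).mp hc).1
        rw [headSign_eq hG, hs] at hrel
        have hc' : G.stepTailSign c = b := by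
          cases hcc : G.stepTailSign c <;> cases b <;> simp_all
        exact ih hc.tail c rfl hc' t ht'

lemma chain_of_allFalse (hG : G.IsDigraphic) :
    ∀ L : List (E × Bool), (∀ s ∈ L, G.stepTailSign s = false) →
      List.Chain' (fun s t => G.stepHeadSign s ≠ G.stepTailSign t) L := by
  intro L
  induction L with
  | nil => exact fun _ => List.isChain_nil
  | cons s L ih =>
    intro h
    cases L with
    | nil => exact List.isChain_singleton _
    | cons c L' =>
      refine List.isChain_cons_cons.mpr ?_
      constructor
      · rw [headSign_eq hG, h s List.mem_cons_self, h c (by simp)]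
        simp
      · exact ih fun t ht => h t (List.mem_cons_of_mem _ ht)

lemma abd_to_dwalk (hG : G.IsDigraphic) {u v : V} {L : List (E × Bool)}
    (h : G.IsABDitrail false true u v L) : DWalk G u v L := by
  obtain ⟨⟨hw, hn, hc⟩, hor⟩ := h
  refine ⟨hw, hn, ?_⟩
  rcases hor with ⟨rfl, -⟩ | ⟨hne, hh, -⟩
  · simp
  · cases L with
    | nil => simp
    | cons s L' => exact sign_chain hG false _ hc s rfl (hh s rfl)

lemma dwalk_to_abd (hG : G.IsDigraphic) {u v : V} {L : List (E × Bool)}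
    (h : DWalk G u v L) : G.IsABDitrail false true u v L := by
  obtain ⟨hw, hn, hs⟩ := h
  refine ⟨⟨hw, hn, chain_of_allFalse hG L hs⟩, ?_⟩
  cases L with
  | nil => exact Or.inl ⟨rfl, by simp⟩
  | cons s L' =>
    refine Or.inr ⟨by simp, ?_, ?_⟩
    · intro t ht
      exact hs t (List.mem_of_mem_head? ht)
    · intro t ht
      rw [headSign_eq hG, hs t (List.mem_of_mem_getLast? ht)]; rfl

lemma abd_tf_to_dwalk (hG : G.IsDigraphic) {u v : V} {L : List (E × Bool)}
    (h : G.IsABDitrail true false u v L) :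
    DWalk G v u ((L.map srev).reverse) ∧ ∀ s ∈ L, srev s ∈ (L.map srev).reverse := by
  obtain ⟨⟨hw, hn, hc⟩, hor⟩ := h
  have hall : ∀ s ∈ L, G.stepTailSign s = true := by
    rcases hor with ⟨rfl, -⟩ | ⟨hne, hh, -⟩
    · simp
    · have ha : L.head? = some (L.head hne) := List.head?_eq_head hne
      exact sign_chain hG true L hc _ ha (hh _ ha)
  refine ⟨⟨isWalk_reverse hw, ?_, ?_⟩, ?_⟩
  · have : ((L.map srev).reverse.map Prod.fst) = (L.map Prod.fst).reverse := by
      simp [srev, Function.comp]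
    rw [this]
    exact List.nodup_reverse.mpr hn
  · intro s hs
    rw [List.mem_reverse, List.mem_map] at hs
    obtain ⟨t, ht, rfl⟩ := hs
    rw [stepTailSign_srev, headSign_eq hG, hall t ht]; rfl
  · intro s hs
    rw [List.mem_reverse]
    exact List.mem_map_of_mem hs

end BidirAux

open BidirAux

/-- In a digraphic bidirected graph, an edge `e` joining `u` and `v`
is circular iff `u` and `v` are strongly connected. -/
theorem digraphic_circular_iff_stronglyConn {V E : Type*} (G : BidirGraph V E)
    (hG : G.IsDigraphic) (e : E) (u v : V)
    (he : (G.fst e = u ∧ G.snd e = v) ∨ (G.fst e = v ∧ G.snd e = u)) :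
    G.IsCircular e ↔ G.StronglyConn u v := by
  set d : Bool := !(G.sgnFst e) with hd
  have hdsign : G.stepTailSign (e, d) = false := by
    have := hG e
    cases hf : G.sgnFst e <;> cases hs : G.sgnSnd e <;>
      simp_all [BidirGraph.stepTailSign, hd]
  have hduniq : ∀ d' : Bool, G.stepTailSign (e, d') = false → d' = d := by
    intro d' h
    have := hG e
    cases d' <;> cases hf : G.sgnFst e <;> cases hs : G.sgnSnd e <;>
      simp_all [BidirGraph.stepTailSign]
  have hab : (G.stepTail (e, d) = u ∧ G.stepHead (e, d) = v) ∨
      (G.stepTail (e, d) = v ∧ G.stepHead (e, d) = u) := by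
    cases hf : G.sgnFst e <;>
      rcases he with ⟨h1, h2⟩ | ⟨h1, h2⟩ <;>
        simp_all [BidirGraph.stepTail, BidirGraph.stepHead, hd]
  constructor
  · rintro ⟨w, α, L0, hL0, d', hd'⟩
    have key : ∃ w' L, DWalk G w' w' L ∧ (e, d) ∈ L := by
      cases α with
      | false =>
        have hD := abd_to_dwalk hG hL0
        have hde : d' = d := hduniq d' (hD.2.2 _ hd')
        exact ⟨w, L0, hD, hde ▸ hd'⟩
      | true =>
        obtain ⟨hD, hmem⟩ := abd_tf_to_dwalk hG hL0
        have h1 := hmem _ hd'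
        have hde : (!d') = d := hduniq (!d') (hD.2.2 _ h1)
        exact ⟨w, _, hD, by rw [← hde]; exact h1⟩
    obtain ⟨w', L, ⟨hW, hN, hS⟩, heL⟩ := key
    obtain ⟨L1, L2, rfl⟩ := List.append_of_mem heL
    obtain ⟨m, h1, h2⟩ := isWalk_split hW
    obtain ⟨hm, h3⟩ := isWalk_cons h2
    subst hm
    have hjoin : G.IsWalk (G.stepHead (e, d)) (G.stepTail (e, d)) (L2 ++ L1) :=
      isWalk_append h3 h1
    have hN' : ((L2 ++ L1).map Prod.fst).Nodup := by
      have h4 : ((L1 ++ L2).map Prod.fst).Nodup := by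
        refine hN.sublist ?_
        simp only [List.map_append, List.map_cons]
        exact (List.sublist_cons_self _ _).append_left _
      rw [List.map_append] at h4 ⊢
      exact List.perm_append_comm.nodup_iff.mpr h4
    have hT : DWalk G (G.stepHead (e, d)) (G.stepTail (e, d)) (L2 ++ L1) :=
      ⟨hjoin, hN', fun s hs => hS s (by simp at hs ⊢; tauto)⟩
    have hE : DWalk G (G.stepTail (e, d)) (G.stepHead (e, d)) [(e, d)] :=
      ⟨isWalk_single _, by simp, by simpa using hdsign⟩
    rcases hab with ⟨ha, hb⟩ | ⟨ha, hb⟩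
    · rw [ha, hb] at hE hT
      exact ⟨⟨_, dwalk_to_abd hG hE⟩, ⟨_, dwalk_to_abd hG hT⟩⟩
    · rw [ha, hb] at hE hT
      exact ⟨⟨_, dwalk_to_abd hG hT⟩, ⟨_, dwalk_to_abd hG hE⟩⟩
  · rintro ⟨⟨P, hP⟩, ⟨Q, hQ⟩⟩
    have hP' := abd_to_dwalk hG hP
    have hQ' := abd_to_dwalk hG hQ
    have hback : ∃ T, DWalk G (G.stepHead (e, d)) (G.stepTail (e, d)) T := by
      rcases hab with ⟨ha, hb⟩ | ⟨ha, hb⟩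
      · exact ⟨Q, by rw [ha, hb]; exact hQ'⟩
      · exact ⟨P, by rw [ha, hb]; exact hP'⟩
    obtain ⟨T, hT⟩ := hback
    have hred : ∃ T', DWalk G (G.stepHead (e, d)) (G.stepTail (e, d)) T' ∧
        e ∉ T'.map Prod.fst := by
      by_cases hmem : e ∈ T.map Prod.fst
      · rw [List.mem_map] at hmem
        obtain ⟨⟨s1, s2⟩, hsT, hs1⟩ := hmem
        simp only at hs1
        subst hs1
        have hsd : s2 = d := hduniq s2 (hT.2.2 _ hsT)
        subst hsd
        obtain ⟨T1, T2, rfl⟩ := List.append_of_mem hsT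
        obtain ⟨m, h1, h2⟩ := isWalk_split hT.1
        obtain ⟨hm, h3⟩ := isWalk_cons h2
        have hnd := hT.2.1
        rw [List.map_append, List.map_cons] at hnd
        have h5 := hnd.of_append_right
        rw [List.nodup_cons] at h5
        exact ⟨T2, ⟨h3, h5.2, fun t ht => hT.2.2 t (by simp [ht])⟩, h5.1⟩
      · exact ⟨T, hT, hmem⟩
    obtain ⟨T', ⟨hW, hN, hS⟩, heT⟩ := hred
    refine ⟨G.stepTail (e, d), false, (e, d) :: T',
      dwalk_to_abd hG ⟨isWalk_cons' hW, ?_, ?_⟩, d, List.mem_cons_self⟩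
    · rw [List.map_cons, List.nodup_cons]
      exact ⟨heT, hN⟩
    · intro s hs
      rcases List.mem_cons.mp hs with rfl | hs'
      · exact hdsign
      · exact hS s hs'
end

section
/- Let G be a digraphic bidirected graph and let u, v be vertices of G. Then u and v are strongly connected if and only if u and v are circularly connected. -/
namespace BidirGraph

variable {V E : Type*} (G : BidirGraph V E)

/-- All steps are traversed from their `-` end to their `+` end. -/
def Fwd (L : List (E × Bool)) : Prop := ∀ s ∈ L, G.stepTailSign s = false

/-- The underlying digraph adjacency. -/
def Adj (x y : V) : Prop :=
  ∃ s : E × Bool, G.stepTailSign s = false ∧ G.stepTail s = x ∧ G.stepHead s = y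

def Reach : V → V → Prop := Relation.ReflTransGen G.Adj

variable {G}

lemma walk_nil (u : V) : G.IsWalk u u [] := by
  refine ⟨List.isChain_nil, fun _ => rfl, ?_, ?_⟩ <;> simp

lemma walk_cons_iff {x v : V} {s : E × Bool} {L : List (E × Bool)} :
    G.IsWalk x v (s :: L) ↔ G.stepTail s = x ∧ G.IsWalk (G.stepHead s) v L := by
  constructor
  · rintro ⟨hc, -, hh, hl⟩
    replace hc := List.isChain_cons.1 hc
    refine ⟨hh s rfl, hc.2, ?_, ?_, ?_⟩
    · intro hL
      subst hL
      exact hl s rfl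
    · intro t ht
      exact (hc.1 t ht).symm
    · intro t ht
      cases L with
      | nil => simp at ht
      | cons a L' =>
        exact hl t (by rw [List.getLast?_cons_cons]; exact ht)
  · rintro ⟨hts, hc, hnil, hh, hl⟩
    refine ⟨List.isChain_cons.2 ⟨fun t ht => (hh t ht).symm, hc⟩, by simp, ?_, ?_⟩
    · intro t ht
      simp at ht
      subst ht
      exact hts
    · intro t ht
      cases L with
      | nil =>
        simp at ht
        subst ht
        exact (hnil rfl).symm ▸ rfl
      | cons a L' =>
        rw [List.getLast?_cons_cons] at ht
        exact hl t ht

lemma walk_eq_of_nil {u v : V} (h : G.IsWalk u v []) : u = v := h.2.1 rfl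

lemma walk_append {u w v : V} {L1 L2 : List (E × Bool)}
    (h1 : G.IsWalk u w L1) (h2 : G.IsWalk w v L2) : G.IsWalk u v (L1 ++ L2) := by
  induction L1 generalizing u with
  | nil => rwa [walk_eq_of_nil h1]
  | cons s L ih =>
    rw [walk_cons_iff] at h1
    exact walk_cons_iff.2 ⟨h1.1, ih h1.2⟩

lemma walk_split {u v : V} {L1 L2 : List (E × Bool)}
    (h : G.IsWalk u v (L1 ++ L2)) : ∃ w, G.IsWalk u w L1 ∧ G.IsWalk w v L2 := by
  induction L1 generalizing u with
  | nil => exact ⟨u, walk_nil u, h⟩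
  | cons s L ih =>
    rw [List.cons_append, walk_cons_iff] at h
    obtain ⟨w, hw1, hw2⟩ := ih h.2
    exact ⟨w, walk_cons_iff.2 ⟨h.1, hw1⟩, hw2⟩

lemma walk_singleton {s : E × Bool} : G.IsWalk (G.stepTail s) (G.stepHead s) [s] :=
  walk_cons_iff.2 ⟨rfl, walk_nil _⟩

lemma walk_reach_s5 {u v : V} {L : List (E × Bool)}
    (h : G.IsWalk u v L) (hf : G.Fwd L) : G.Reach u v := by
  induction L generalizing u with
  | nil => exact walk_eq_of_nil h ▸ Relation.ReflTransGen.refl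
  | cons s L ih =>
    rw [walk_cons_iff] at h
    exact Relation.ReflTransGen.head
      ⟨s, hf s (by simp), h.1, rfl⟩ (ih h.2 (fun t ht => hf t (by simp [ht])))

lemma reach_walk {u v : V} (h : G.Reach u v) :
    ∃ L, G.IsWalk u v L ∧ G.Fwd L := by
  induction h with
  | refl => exact ⟨[], walk_nil u, by intro s hs; simp at hs⟩
  | tail _ hadj ih =>
    obtain ⟨L, hL, hf⟩ := ih
    obtain ⟨s, hs, hts, hhs⟩ := hadj
    refine ⟨L ++ [s], walk_append hL (hts ▸ hhs ▸ walk_singleton), ?_⟩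
    intro t ht
    rcases List.mem_append.1 ht with h' | h'
    · exact hf t h'
    · simp at h'; subst h'; exact hs

lemma walk_to_path_aux : ∀ (n : ℕ) {u v : V} {L : List (E × Bool)}, L.length ≤ n →
    G.IsWalk u v L →
    ∃ P, G.IsWalk u v P ∧ (u :: P.map G.stepHead).Nodup ∧ ∀ s ∈ P, s ∈ L := by
  intro n
  induction n with
  | zero =>
    intro u v L hn h
    rw [Nat.le_zero, List.length_eq_zero_iff] at hn
    subst hn
    exact ⟨[], h, by simp, by simp⟩
  | succ n ih =>
    intro u v L hn h
    by_cases hu : u ∈ L.map G.stepHead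
    · obtain ⟨p, hp, hpu⟩ := List.mem_map.1 hu
      obtain ⟨L1, L2, hL⟩ := List.append_of_mem hp
      subst hL
      obtain ⟨w, -, hw2⟩ := walk_split h
      rw [walk_cons_iff] at hw2
      have h2 : G.IsWalk u v L2 := hpu ▸ hw2.2
      have hlen : L2.length ≤ n := by
        have := hn
        simp [List.length_append] at this
        omega
      obtain ⟨P, hP, hnd, hsub⟩ := ih hlen h2
      exact ⟨P, hP, hnd, fun s hs => by simp [hsub s hs]⟩
    · cases L with
      | nil => exact ⟨[], h, by simp, by simp⟩
      | cons s L' =>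
        rw [walk_cons_iff] at h
        have hlen : L'.length ≤ n := by simp at hn; omega
        obtain ⟨P, hP, hnd, hsub⟩ := ih hlen h.2
        refine ⟨s :: P, walk_cons_iff.2 ⟨h.1, hP⟩, ?_, ?_⟩
        · refine List.nodup_cons.2 ⟨?_, hnd⟩
          intro hmem
          apply hu
          simp only [List.map_cons, List.mem_cons] at hmem ⊢
          rcases hmem with h' | h'
          · exact Or.inl h'
          · obtain ⟨t, ht, htu⟩ := List.mem_map.1 h'
            exact Or.inr (List.mem_map.2 ⟨t, hsub t ht, htu⟩)
        · intro t ht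
          rcases List.mem_cons.1 ht with h' | h'
          · simp [h']
          · simp [hsub t h']

lemma walk_to_path {u v : V} {L : List (E × Bool)} (h : G.IsWalk u v L) :
    ∃ P, G.IsWalk u v P ∧ (u :: P.map G.stepHead).Nodup ∧ ∀ s ∈ P, s ∈ L :=
  walk_to_path_aux L.length le_rfl h

variable (hG : G.IsDigraphic)
include hG

lemma headSign_eq (s : E × Bool) : G.stepHeadSign s = !G.stepTailSign s := by
  obtain ⟨e, d⟩ := s
  have := hG e
  cases d <;> simp [stepHeadSign, stepTailSign] <;>
    revert this <;> cases G.sgnFst e <;> cases G.sgnSnd e <;> simp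

/-- in a digraphic graph, a sign-alternating chain starting with tail sign `α`
has all tail signs `α`. -/
lemma allSign {α : Bool} : ∀ {L : List (E × Bool)},
    List.Chain' (fun s t => G.stepHeadSign s ≠ G.stepTailSign t) L →
    (∀ s, L.head? = some s → G.stepTailSign s = α) →
    ∀ s ∈ L, G.stepTailSign s = α := by
  intro L
  induction L with
  | nil => intro _ _ s hs; simp at hs
  | cons s L ih =>
    intro hc hh t ht
    have hs : G.stepTailSign s = α := hh s rfl
    rcases List.mem_cons.1 ht with h' | h'
    · rw [h', hs]
    replace hc := List.isChain_cons.1 hc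
    refine ih hc.2 ?_ t h'
    intro r hr
    have := hc.1 r hr
    rw [headSign_eq hG, hs] at this
    revert this
    cases G.stepTailSign r <;> cases α <;> simp

lemma ditrail_fwd {u v : V} {L : List (E × Bool)}
    (h : G.IsABDitrail false true u v L) : G.IsWalk u v L ∧ G.Fwd L := by
  obtain ⟨⟨hw, -, hc⟩, hd⟩ := h
  refine ⟨hw, ?_⟩
  rcases hd with ⟨hnil, -⟩ | ⟨-, hh, -⟩
  · subst hnil; intro s hs; simp at hs
  · exact allSign hG hc hh

omit hG in
lemma chain'_of_mem {α : Type*} {S : α → α → Prop} :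
    ∀ {L : List α}, (∀ s ∈ L, ∀ t ∈ L, S s t) → List.Chain' S L
  | [], _ => List.isChain_nil
  | [_], _ => List.isChain_singleton _
  | a :: b :: L, h => List.isChain_cons_cons.2
      ⟨h a (by simp) b (by simp),
       chain'_of_mem (fun s hs t ht => h s (by simp [hs]) t (by simp [ht]))⟩

lemma fwd_ditrail {u v : V} {L : List (E × Bool)}
    (hw : G.IsWalk u v L) (hnd : (L.map Prod.fst).Nodup) (hf : G.Fwd L) :
    G.IsABDitrail false true u v L := by
  refine ⟨⟨hw, hnd, chain'_of_mem (fun s hs t ht => ?_)⟩, ?_⟩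
  · rw [headSign_eq hG, hf s hs, hf t ht]; simp
  · cases L with
    | nil => exact Or.inl ⟨rfl, by simp⟩
    | cons s L =>
      refine Or.inr ⟨by simp, fun t ht => hf t (by
        simp at ht; simp [ht]), fun t ht => ?_⟩
      rw [headSign_eq hG, hf t (List.mem_of_getLast? ht)]
      simp

omit hG

lemma stepTail_flip (e : E) (d : Bool) : G.stepTail (e, !d) = G.stepHead (e, d) := by
  cases d <;> simp [stepTail, stepHead]

lemma stepHead_flip (e : E) (d : Bool) : G.stepHead (e, !d) = G.stepTail (e, d) := by
  cases d <;> simp [stepTail, stepHead]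

lemma stepTailSign_flip (e : E) (d : Bool) :
    G.stepTailSign (e, !d) = G.stepHeadSign (e, d) := by
  cases d <;> simp [stepTailSign, stepHeadSign]

lemma walk_reverse {u v : V} {L : List (E × Bool)} (h : G.IsWalk u v L) :
    G.IsWalk v u ((L.map (fun s => (s.1, !s.2))).reverse) := by
  induction L generalizing u with
  | nil => rw [walk_eq_of_nil h]; exact walk_nil v
  | cons s L ih =>
    rw [walk_cons_iff] at h
    simp only [List.map_cons, List.reverse_cons]
    refine walk_append (ih h.2) ?_
    have h1 : G.stepTail (s.1, !s.2) = G.stepHead s := stepTail_flip s.1 s.2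
    have h2 : G.stepHead (s.1, !s.2) = G.stepTail s := stepHead_flip s.1 s.2
    rw [← h.1, ← h1, ← h2]
    exact walk_singleton

include hG

lemma fwd_eq_of_fst {s t : E × Bool} (hs : G.stepTailSign s = false)
    (ht : G.stepTailSign t = false) (h : s.1 = t.1) : s = t := by
  obtain ⟨e, d1⟩ := s
  obtain ⟨e', d2⟩ := t
  cases h
  have := hG e
  cases d1 <;> cases d2 <;> simp_all [stepTailSign]

lemma path_edges_nodup {L : List (E × Bool)} (hf : G.Fwd L)
    (hnd : (L.map G.stepHead).Nodup) : (L.map Prod.fst).Nodup := by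
  refine List.Nodup.map_on ?_ hnd.of_map
  intro s hs t ht h
  exact fwd_eq_of_fst hG (hf s hs) (hf t ht) h

lemma circular_fwdCycle {e : E} (hcirc : G.IsCircular e) :
    ∃ w W, G.IsWalk w w W ∧ G.Fwd W ∧ ∃ d, (e, d) ∈ W := by
  obtain ⟨w, α, L, hdit, d, hd⟩ := hcirc
  have hsigns : ∀ s ∈ L, G.stepTailSign s = α := by
    rcases hdit.2 with ⟨hnil, -⟩ | ⟨-, hh, -⟩
    · subst hnil; simp at hd
    · exact allSign hG hdit.1.2.2 hh
  cases α with
  | false => exact ⟨w, L, hdit.1.1, hsigns, d, hd⟩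
  | true =>
    refine ⟨w, (L.map (fun s => (s.1, !s.2))).reverse, walk_reverse hdit.1.1, ?_, !d, ?_⟩
    · intro s hs
      simp only [List.mem_reverse, List.mem_map] at hs
      obtain ⟨t, ht, rfl⟩ := hs
      rw [stepTailSign_flip, headSign_eq hG, hsigns t ht]
      rfl
    · simp only [List.mem_reverse, List.mem_map]
      exact ⟨(e, d), hd, rfl⟩

omit hG in
lemma cyc_reach {w : V} {W : List (E × Bool)} (hw : G.IsWalk w w W) (hf : G.Fwd W)
    {t : E × Bool} (ht : t ∈ W) :
    G.Reach (G.stepTail t) (G.stepHead t) ∧ G.Reach (G.stepHead t) (G.stepTail t) := by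
  obtain ⟨W1, W2, rfl⟩ := List.append_of_mem ht
  obtain ⟨x, hx1, hx2⟩ := walk_split hw
  rw [walk_cons_iff] at hx2
  constructor
  · exact Relation.ReflTransGen.single ⟨t, hf t ht, rfl, rfl⟩
  · refine (walk_reach_s5 hx2.2 (fun s hs => hf s ?_)).trans
      (hx2.1 ▸ walk_reach_s5 hx1 (fun s hs => hf s ?_)) <;> simp [hs]

lemma circ_reach {e : E} (hcirc : G.IsCircular e) (d : Bool) :
    G.Reach (G.stepTail (e, d)) (G.stepHead (e, d)) ∧
    G.Reach (G.stepHead (e, d)) (G.stepTail (e, d)) := by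
  obtain ⟨w, W, hw, hf, d0, hd0⟩ := circular_fwdCycle hG hcirc
  have h0 := cyc_reach hw hf hd0
  rcases Bool.eq_or_eq_not d d0 with rfl | rfl
  · exact h0
  · rw [stepTail_flip, stepHead_flip]
    exact ⟨h0.2, h0.1⟩

lemma reach_ditrail {u v : V} (h : G.Reach u v) :
    ∃ L, G.IsABDitrail false true u v L := by
  obtain ⟨L, hw, hf⟩ := reach_walk h
  obtain ⟨P, hP, hnd, hsub⟩ := walk_to_path hw
  have hfP : G.Fwd P := fun s hs => hf s (hsub s hs)
  exact ⟨P, fwd_ditrail hG hP (path_edges_nodup hG hfP hnd.of_cons) hfP⟩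

lemma circwalk_reach {u v : V} {L : List (E × Bool)} (hw : G.IsWalk u v L)
    (hcirc : ∀ p ∈ L, G.IsCircular p.1) : G.Reach u v ∧ G.Reach v u := by
  induction L generalizing u with
  | nil => rw [walk_eq_of_nil hw]; exact ⟨.refl, .refl⟩
  | cons p L ih =>
    rw [walk_cons_iff] at hw
    have hp := circ_reach hG (hcirc p (by simp)) p.2
    have ih' := ih hw.2 (fun q hq => hcirc q (by simp [hq]))
    rw [← hw.1]
    exact ⟨hp.1.trans ih'.1, ih'.2.trans hp.2⟩

end BidirGraph

theorem digraphic_stronglyConn_iff_circConn' {V E : Type*} (G : BidirGraph V E)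
    (hG : G.IsDigraphic) (u v : V) :
    G.StronglyConn u v ↔ G.CircConn u v := by
  constructor
  · rintro ⟨⟨L1, h1⟩, ⟨L2, h2⟩⟩
    obtain ⟨hw1, hf1⟩ := BidirGraph.ditrail_fwd hG h1
    obtain ⟨hw2, hf2⟩ := BidirGraph.ditrail_fwd hG h2
    have ruv := BidirGraph.walk_reach_s5 hw1 hf1
    have rvu := BidirGraph.walk_reach_s5 hw2 hf2
    obtain ⟨P, hP, hnd, hsub⟩ := BidirGraph.walk_to_path hw1
    have hfP : G.Fwd P := fun s hs => hf1 s (hsub s hs)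
    refine ⟨P, hP, hnd, ?_⟩
    intro p hp
    obtain ⟨P1, P2, rfl⟩ := List.append_of_mem hp
    obtain ⟨x, hx1, hx2⟩ := BidirGraph.walk_split hP
    rw [BidirGraph.walk_cons_iff] at hx2
    have r1 : G.Reach u x := BidirGraph.walk_reach_s5 hx1 (fun s hs => hfP s (by simp [hs]))
    rw [← hx2.1] at r1
    have rh : G.Reach (G.stepHead p) (G.stepTail p) :=
      (BidirGraph.walk_reach_s5 hx2.2 (fun s hs => hfP s (by simp [hs]))).trans
        (rvu.trans r1)
    obtain ⟨Q, hQw, hQf⟩ := BidirGraph.reach_walk rh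
    obtain ⟨Q', hQ'w, hQ'nd, hQ'sub⟩ := BidirGraph.walk_to_path hQw
    have hQ'f : G.Fwd Q' := fun s hs => hQf s (hQ'sub s hs)
    have hC : G.IsWalk (G.stepTail p) (G.stepTail p) (p :: Q') :=
      BidirGraph.walk_cons_iff.2 ⟨rfl, hQ'w⟩
    have hCf : G.Fwd (p :: Q') := by
      intro s hs
      rcases List.mem_cons.1 hs with rfl | h'
      · exact hfP _ hp
      · exact hQ'f s h'
    have hCnd : ((p :: Q').map Prod.fst).Nodup := by
      rw [List.map_cons, List.nodup_cons]
      refine ⟨?_, BidirGraph.path_edges_nodup hG hQ'f hQ'nd.of_cons⟩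
      intro hmem
      obtain ⟨q, hq, hq1⟩ := List.mem_map.1 hmem
      have : q = p := BidirGraph.fwd_eq_of_fst hG (hQ'f q hq) (hfP p hp) hq1
      subst this
      exact (List.nodup_cons.1 hQ'nd).1 (List.mem_map.2 ⟨q, hq, rfl⟩)
    exact ⟨G.stepTail p, false, p :: Q',
      BidirGraph.fwd_ditrail hG hC hCnd hCf, p.2, by simp⟩
  · rintro ⟨L, hw, -, hcirc⟩
    have key := BidirGraph.circwalk_reach hG hw hcirc
    exact ⟨BidirGraph.reach_ditrail hG key.1, BidirGraph.reach_ditrail hG key.2⟩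

/-- In a digraphic bidirected graph, two vertices are strongly
connected iff they are circularly connected. -/
theorem digraphic_stronglyConn_iff_circConn {V E : Type*} (G : BidirGraph V E)
    (hG : G.IsDigraphic) (u v : V) :
    G.StronglyConn u v ↔ G.CircConn u v := by
  exact digraphic_stronglyConn_iff_circConn' G hG u v
end

section
/- Let G be a bidirected graph, let α ∈ {+, −}, and let H be a circular component of G. Then the family { S ∈ P(G; α) : S ⊆ V(H) } is a refinement of P(H; α): every equivalence class of the relation ∼_α of G that is contained in V(H) is contained in some equivalence class of the relation ∼_α of the bidirected graph H (with the signs inherited from G). -/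
/-- The induced sub-bidirected-graph on a vertex set `C`, with inherited signs. -/
def BidirGraph.induce {V E : Type*} (G : BidirGraph V E) (C : Set V) :
    BidirGraph C {e : E // G.fst e ∈ C ∧ G.snd e ∈ C} where
  fst e := ⟨G.fst e.1, e.2.1⟩
  snd e := ⟨G.snd e.1, e.2.2⟩
  sgnFst e := G.sgnFst e.1
  sgnSnd e := G.sgnSnd e.1

namespace BidirGraph

variable {V E : Type*} (G : BidirGraph V E)

/-- Inductive characterization of walks. -/
inductive Walk : V → V → List (E × Bool) → Prop
  | nil (u : V) : Walk u u []
  | cons {u v : V} {s : E × Bool} {L : List (E × Bool)}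
      (h : G.stepTail s = u) (hw : Walk (G.stepHead s) v L) : Walk u v (s :: L)

variable {G}

theorem Walk.isWalk {u v : V} {L : List (E × Bool)} (h : G.Walk u v L) :
    G.IsWalk u v L := by
  induction h with
  | nil u => exact ⟨List.isChain_nil, fun _ => rfl, by simp, by simp⟩
  | @cons u v s L h hw ih =>
    obtain ⟨hc, he, hh, hl⟩ := ih
    refine ⟨?_, by simp, ?_, ?_⟩
    · cases L with
      | nil => exact List.isChain_singleton _
      | cons t M =>
        exact List.isChain_cons_cons.mpr ⟨(hh t rfl).symm, hc⟩
    · intro t ht; simp at ht; rw [← ht]; exact h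
    · intro t ht
      cases L with
      | nil => simp at ht; rw [← ht]; exact he rfl
      | cons r M => rw [List.getLast?_cons_cons] at ht; exact hl t ht

theorem IsWalk.walk {u v : V} {L : List (E × Bool)} (h : G.IsWalk u v L) :
    G.Walk u v L := by
  induction L generalizing u with
  | nil => rw [h.2.1 rfl]; exact Walk.nil v
  | cons s M ih =>
    obtain ⟨hc, _, hh, hl⟩ := h
    refine Walk.cons (hh s rfl) (ih ⟨(List.isChain_cons.mp hc).2, ?_, ?_, ?_⟩)
    · intro hM; subst hM; exact hl s rfl
    · intro t ht; exact ((List.isChain_cons.mp hc).1 t ht).symm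
    · intro t ht
      apply hl
      cases M with
      | nil => simp at ht
      | cons r M' => rw [List.getLast?_cons_cons]; exact ht

theorem Walk.cons_inv {u v : V} {s : E × Bool} {L : List (E × Bool)}
    (h : G.Walk u v (s :: L)) :
    G.stepTail s = u ∧ G.Walk (G.stepHead s) v L := by
  cases h with | cons h hw => exact ⟨h, hw⟩

theorem Walk.append {u v w : V} {L M : List (E × Bool)}
    (h₁ : G.Walk u v L) (h₂ : G.Walk v w M) : G.Walk u w (L ++ M) := by
  induction h₁ with
  | nil => exact h₂
  | cons h hw ih => exact Walk.cons h (ih h₂)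

theorem stepTail_flip_s10 (q : E × Bool) : G.stepTail (q.1, !q.2) = G.stepHead q := by
  cases q with | mk e d => cases d <;> rfl

theorem stepHead_flip_s10 (q : E × Bool) : G.stepHead (q.1, !q.2) = G.stepTail q := by
  cases q with | mk e d => cases d <;> rfl

theorem Walk.reverse {u v : V} {L : List (E × Bool)} (h : G.Walk u v L) :
    G.Walk v u (L.reverse.map (fun q => (q.1, !q.2))) := by
  induction h with
  | nil u => exact Walk.nil u
  | @cons u v s L h hw ih =>
    have hstep : G.Walk (G.stepHead s) u [(s.1, !s.2)] := by
      refine Walk.cons (stepTail_flip_s10 s) ?_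
      rw [stepHead_flip_s10 s, h]; exact Walk.nil u
    simpa using ih.append hstep

/-- A walk all of whose edges are circular. -/
def CWalk (G : BidirGraph V E) (u v : V) : Prop :=
  ∃ L, G.Walk u v L ∧ ∀ q ∈ L, G.IsCircular q.1

theorem CWalk.refl (u : V) : G.CWalk u u := ⟨[], Walk.nil u, by simp⟩

theorem CWalk.symm {u v : V} (h : G.CWalk u v) : G.CWalk v u := by
  obtain ⟨L, hw, hcirc⟩ := h
  refine ⟨_, hw.reverse, ?_⟩
  intro q hq
  simp only [List.mem_map, List.mem_reverse] at hq
  obtain ⟨p, hp, rfl⟩ := hq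
  exact hcirc p hp

theorem CWalk.trans {u v w : V} (h₁ : G.CWalk u v) (h₂ : G.CWalk v w) :
    G.CWalk u w := by
  obtain ⟨L, hw₁, hc₁⟩ := h₁
  obtain ⟨M, hw₂, hc₂⟩ := h₂
  refine ⟨L ++ M, hw₁.append hw₂, ?_⟩
  intro q hq
  rcases List.mem_append.mp hq with h | h
  · exact hc₁ q h
  · exact hc₂ q h

theorem Walk.truncate {a v u : V} {P : List (E × Bool)} (h : G.Walk a v P)
    (hu : u ∈ a :: P.map G.stepHead) :
    ∃ Q, G.Walk u v Q ∧ (u :: Q.map G.stepHead) <:+ (a :: P.map G.stepHead) ∧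
      Q.Sublist P := by
  induction h with
  | nil b =>
    simp at hu
    subst hu
    exact ⟨[], Walk.nil _, List.suffix_refl _, List.Sublist.refl _⟩
  | @cons b v s L h hw ih =>
    rcases List.mem_cons.mp hu with rfl | hu'
    · exact ⟨s :: L, Walk.cons h hw, by simp [List.suffix_refl], List.Sublist.refl _⟩
    · rw [List.map_cons] at hu' ⊢
      obtain ⟨Q, hQw, hsuf, hsub⟩ := ih hu'
      exact ⟨Q, hQw, hsuf.trans (List.suffix_cons _ _), hsub.trans (List.sublist_cons_self _ _)⟩

theorem Walk.toPath {u v : V} {L : List (E × Bool)} (h : G.Walk u v L) :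
    ∃ P, G.Walk u v P ∧ (u :: P.map G.stepHead).Nodup ∧ P.Sublist L := by
  induction h with
  | nil u => exact ⟨[], Walk.nil u, by simp, List.Sublist.refl _⟩
  | @cons u v s L h hw ih =>
    obtain ⟨P, hPw, hPnd, hPsub⟩ := ih
    by_cases hu : u ∈ G.stepHead s :: P.map G.stepHead
    · obtain ⟨Q, hQw, hsuf, hsub⟩ := hPw.truncate hu
      exact ⟨Q, hQw, hsuf.sublist.nodup hPnd,
        (hsub.trans hPsub).trans (List.sublist_cons_self _ _)⟩
    · refine ⟨s :: P, Walk.cons h hPw, ?_, hPsub.cons_cons s⟩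
      rw [List.map_cons]
      exact List.nodup_cons.mpr ⟨hu, hPnd⟩

theorem circConn_iff_cwalk {u v : V} : G.CircConn u v ↔ G.CWalk u v := by
  constructor
  · rintro ⟨L, hw, _, hcirc⟩
    exact ⟨L, hw.walk, hcirc⟩
  · rintro ⟨L, hw, hcirc⟩
    obtain ⟨P, hPw, hPnd, hPsub⟩ := hw.toPath
    exact ⟨P, hPw.isWalk, hPnd, fun p hp => hcirc p (hPsub.mem hp)⟩

theorem Walk.cwalk_of_mem {u v : V} {L : List (E × Bool)} (h : G.Walk u v L)
    (hcirc : ∀ q ∈ L, G.IsCircular q.1) :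
    ∀ q ∈ L, G.CWalk u (G.stepTail q) ∧ G.CWalk u (G.stepHead q) := by
  induction h with
  | nil => simp
  | @cons u v s L h hw ih =>
    intro q hq
    have hstep : G.CWalk u (G.stepHead s) :=
      ⟨[s], Walk.cons h (Walk.nil _),
        by intro p hp; rw [List.mem_singleton] at hp; subst hp
           exact hcirc _ (List.mem_cons_self)⟩
    rcases List.mem_cons.mp hq with rfl | hq'
    · exact ⟨by rw [h]; exact CWalk.refl u, hstep⟩
    · have := ih (fun p hp => hcirc p (List.mem_cons_of_mem _ hp)) q hq'
      exact ⟨hstep.trans this.1, hstep.trans this.2⟩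

end BidirGraph

namespace BidirGraph

section Induce

variable {V E : Type*} {G : BidirGraph V E} {C : Set V}

theorem induce_stepTail (q : {e : E // G.fst e ∈ C ∧ G.snd e ∈ C} × Bool) :
    ((G.induce C).stepTail q).1 = G.stepTail (q.1.1, q.2) := by
  obtain ⟨e, d⟩ := q; cases d <;> rfl

theorem induce_stepHead (q : {e : E // G.fst e ∈ C ∧ G.snd e ∈ C} × Bool) :
    ((G.induce C).stepHead q).1 = G.stepHead (q.1.1, q.2) := by
  obtain ⟨e, d⟩ := q; cases d <;> rfl

theorem walk_induce_iff {u v : C} {L : List ({e : E // G.fst e ∈ C ∧ G.snd e ∈ C} × Bool)} :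
    (G.induce C).Walk u v L ↔ G.Walk u.1 v.1 (L.map fun q => (q.1.1, q.2)) := by
  constructor
  · intro h
    induction h with
    | nil u => exact Walk.nil u.1
    | @cons u v s L h hw ih =>
      refine Walk.cons ?_ ?_
      · rw [← induce_stepTail s, h]
      · rw [← induce_stepHead s]; exact ih
  · intro h
    induction L generalizing u with
    | nil =>
      have huv : u = v := Subtype.ext (h.isWalk.2.1 rfl)
      rw [huv]; exact Walk.nil v
    | cons s M ih =>
      rw [List.map_cons] at h
      obtain ⟨h1, hw⟩ := h.cons_inv
      refine Walk.cons (Subtype.ext (by rw [induce_stepTail s]; exact h1)) (ih ?_)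
      rw [induce_stepHead s]
      exact hw

theorem isWalk_induce_iff {u v : C} {L : List ({e : E // G.fst e ∈ C ∧ G.snd e ∈ C} × Bool)} :
    (G.induce C).IsWalk u v L ↔ G.IsWalk u.1 v.1 (L.map fun q => (q.1.1, q.2)) := by
  constructor
  · intro h; exact (walk_induce_iff.mp h.walk).isWalk
  · intro h; exact (walk_induce_iff.mpr h.walk).isWalk

theorem isABDitrail_induce_iff {α β : Bool} {u v : C}
    {L : List ({e : E // G.fst e ∈ C ∧ G.snd e ∈ C} × Bool)} :
    (G.induce C).IsABDitrail α β u v L ↔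
      G.IsABDitrail α β u.1 v.1 (L.map fun q => (q.1.1, q.2)) := by
  have hmap : ((L.map fun q => (q.1.1, q.2)).map Prod.fst)
      = (L.map Prod.fst).map Subtype.val := by
    simp [List.map_map, Function.comp_def]
  have hnd : ((L.map fun q => (q.1.1, q.2)).map Prod.fst).Nodup
      ↔ (L.map Prod.fst).Nodup := by
    rw [hmap]; exact List.nodup_map_iff Subtype.val_injective
  have hch : List.Chain' (fun s t => G.stepHeadSign s ≠ G.stepTailSign t)
      (L.map fun q => (q.1.1, q.2)) ↔
      List.Chain' (fun s t =>
        (G.induce C).stepHeadSign s ≠ (G.induce C).stepTailSign t) L := by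
    show List.IsChain _ _ ↔ List.IsChain _ _; rw [List.isChain_map]
    exact Iff.rfl
  have hhd : (∀ s, (L.map fun q => (q.1.1, q.2)).head? = some s →
        G.stepTailSign s = α) ↔
      (∀ s, L.head? = some s → (G.induce C).stepTailSign s = α) := by
    constructor
    · intro h s hs
      exact h _ (by rw [List.head?_map, hs]; rfl)
    · intro h s hs
      rw [List.head?_map] at hs
      obtain ⟨t, ht, rfl⟩ := Option.map_eq_some_iff.mp hs
      exact h t ht
  have hlst : (∀ s, (L.map fun q => (q.1.1, q.2)).getLast? = some s →
        G.stepHeadSign s = β) ↔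
      (∀ s, L.getLast? = some s → (G.induce C).stepHeadSign s = β) := by
    constructor
    · intro h s hs
      exact h _ (by rw [List.getLast?_map, hs]; rfl)
    · intro h s hs
      rw [List.getLast?_map] at hs
      obtain ⟨t, ht, rfl⟩ := Option.map_eq_some_iff.mp hs
      exact h t ht
  unfold IsABDitrail IsDitrail
  rw [isWalk_induce_iff, hnd, hch, hhd, hlst]
  simp only [ne_eq, List.map_eq_nil_iff]

variable (G C) in
theorem proj_pmap {L : List (E × Bool)}
    (h : ∀ q ∈ L, G.fst q.1 ∈ C ∧ G.snd q.1 ∈ C) :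
    ((L.pmap (fun q hq =>
        ((⟨q.1, hq⟩ : {e : E // G.fst e ∈ C ∧ G.snd e ∈ C}), q.2)) h).map
      fun q => (q.1.1, q.2)) = L := by
  rw [List.map_pmap]
  simp

theorem isCircular_induce {v₀ : V} (hC : C = {u | G.CircConn u v₀})
    (e : {e : E // G.fst e ∈ C ∧ G.snd e ∈ C}) (h : G.IsCircular e.1) :
    (G.induce C).IsCircular e := by
  have hCd : ∀ z, z ∈ C ↔ G.CircConn z v₀ := fun z => by rw [hC]; exact Iff.rfl
  obtain ⟨x, a, M, hd, d, hdM⟩ := h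
  have hMw : G.Walk x x M := hd.1.1.walk
  have hMcirc : ∀ q ∈ M, G.IsCircular q.1 := fun q hq => ⟨x, a, M, hd, q.2, hq⟩
  have hverts := hMw.cwalk_of_mem hMcirc
  have hxv₀ : G.CWalk x v₀ := by
    have h1 : G.CWalk x (G.stepTail (e.1, d)) := (hverts _ hdM).1
    have h2 : G.stepTail (e.1, d) ∈ C := by
      cases d
      · exact e.2.2
      · exact e.2.1
    exact h1.trans (circConn_iff_cwalk.mp ((hCd _).mp h2))
  have hmemC : ∀ z, G.CWalk x z → z ∈ C := fun z hz =>
    (hCd z).mpr (circConn_iff_cwalk.mpr (hz.symm.trans hxv₀))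
  have hM : ∀ q ∈ M, G.fst q.1 ∈ C ∧ G.snd q.1 ∈ C := by
    intro q hq
    have ht := hmemC _ (hverts q hq).1
    have hh := hmemC _ (hverts q hq).2
    obtain ⟨e', d'⟩ := q
    cases d'
    · exact ⟨hh, ht⟩
    · exact ⟨ht, hh⟩
  refine ⟨⟨x, hmemC x (CWalk.refl x)⟩, a,
    M.pmap (fun q hq =>
      ((⟨q.1, hq⟩ : {e : E // G.fst e ∈ C ∧ G.snd e ∈ C}), q.2)) hM, ?_, d, ?_⟩
  · exact isABDitrail_induce_iff.mpr (by rw [proj_pmap]; exact hd)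
  · rw [List.mem_pmap]
    exact ⟨(e.1, d), hdM, rfl⟩

theorem circConn_induce {v₀ : V} (hC : C = {u | G.CircConn u v₀}) {u w : V}
    (hu : u ∈ C) (hw : w ∈ C) (h : G.CircConn u w) :
    (G.induce C).CircConn ⟨u, hu⟩ ⟨w, hw⟩ := by
  have hCd : ∀ z, z ∈ C ↔ G.CircConn z v₀ := fun z => by rw [hC]; exact Iff.rfl
  obtain ⟨L, hwalk, hnd, hcirc⟩ := h
  have hW : G.Walk u w L := hwalk.walk
  have hverts := hW.cwalk_of_mem hcirc
  have huv₀ : G.CWalk u v₀ := circConn_iff_cwalk.mp ((hCd u).mp hu)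
  have hmemC : ∀ z, G.CWalk u z → z ∈ C := fun z hz =>
    (hCd z).mpr (circConn_iff_cwalk.mpr (hz.symm.trans huv₀))
  have hL : ∀ q ∈ L, G.fst q.1 ∈ C ∧ G.snd q.1 ∈ C := by
    intro q hq
    have ht := hmemC _ (hverts q hq).1
    have hh := hmemC _ (hverts q hq).2
    obtain ⟨e', d'⟩ := q
    cases d'
    · exact ⟨hh, ht⟩
    · exact ⟨ht, hh⟩
  refine ⟨L.pmap (fun q hq =>
      ((⟨q.1, hq⟩ : {e : E // G.fst e ∈ C ∧ G.snd e ∈ C}), q.2)) hL,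
    isWalk_induce_iff.mpr (by rw [proj_pmap]; exact hwalk), ?_, ?_⟩
  · apply List.Nodup.of_map Subtype.val
    have heq : (((⟨u, hu⟩ : C) :: (L.pmap (fun q hq =>
        ((⟨q.1, hq⟩ : {e : E // G.fst e ∈ C ∧ G.snd e ∈ C}), q.2)) hL).map
          (G.induce C).stepHead).map
        Subtype.val) = u :: L.map G.stepHead := by
      rw [List.map_cons, List.map_map]
      congr 1
      conv_rhs => rw [← proj_pmap G C hL, List.map_map]
      exact List.map_congr_left fun q _ => induce_stepHead q
    rw [heq]
    exact hnd
  · intro p hp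
    have hpm : (p.1.1, p.2) ∈ L := by
      rw [← proj_pmap G C hL]
      exact List.mem_map_of_mem hp
    exact isCircular_induce hC p.1 (hcirc _ hpm)

end Induce

end BidirGraph

/-- Let `C` be the vertex set of a circular component `H` of `G`.
Every `∼_α`-class of `G` that is contained in `C` is contained in some `∼_α`-class of
the bidirected graph `H` (the induced subgraph on `C` with inherited signs); i.e., the
family of classes of `G` inside `C` refines the decomposition of `H`. -/
theorem simRel_classes_refine_component {V E : Type*} (G : BidirGraph V E) (α : Bool)
    (C : Set V) (hC : G.IsCircComponent C) (v : V)
    (hv : {u | G.SimRel α u v} ⊆ C) :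
    ∃ w : C, ∀ (u : V) (hu : G.SimRel α u v),
      (G.induce C).SimRel α ⟨u, hv hu⟩ w := by
  obtain ⟨v₀, hCeq⟩ := hC
  have hvC : v ∈ C := hv (Or.inl rfl)
  refine ⟨⟨v, hvC⟩, ?_⟩
  intro u hu
  rcases hu with heq | ⟨hconn, hno⟩
  · exact Or.inl (Subtype.ext heq)
  · have huC : u ∈ C := hv (Or.inr ⟨hconn, hno⟩)
    refine Or.inr ⟨BidirGraph.circConn_induce hCeq huC hvC hconn, ?_⟩
    rintro ⟨L', hL'⟩
    apply hno
    refine ⟨L'.map fun q => (q.1.1, q.2), ?_⟩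
    rcases hL' with h | h
    · exact Or.inl (BidirGraph.isABDitrail_induce_iff.mp h)
    · exact Or.inr (BidirGraph.isABDitrail_induce_iff.mp h)
end

section
/- Let G be a b-factorizable graph, where b : V(G) → ℤ≥0, let M be a b-factor of G, and let α ∈ {+, −}. Then for all vertices u, v of G, u ∼_{b,α} v holds in G if and only if u ∼_α v holds in the bidirected graph G^M. -/
variable {V : Type*} [Fintype V] [DecidableEq V]

/-- `M` is a `b`-factor of `G`: a set of edges of `G` such that every vertex `v` is
incident with exactly `b v` edges of `M`. (Stated with integer-valued `b` so that
functions like `b - χ_u - χ_v` can be used without truncation.) -/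
def SimpleGraph.IsBFactor (G : SimpleGraph V) (b : V → ℤ) (M : Finset (Sym2 V)) : Prop :=
  ↑M ⊆ G.edgeSet ∧ ∀ v : V, ((M.filter (fun e => v ∈ e)).card : ℤ) = b v

/-- An edge is `b`-flexible if some `b`-factor contains it and some `b`-factor
avoids it. -/
def SimpleGraph.IsBFlexible (G : SimpleGraph V) (b : V → ℕ) (e : Sym2 V) : Prop :=
  (∃ M, G.IsBFactor (fun w => (b w : ℤ)) M ∧ e ∈ M) ∧
  (∃ M, G.IsBFactor (fun w => (b w : ℤ)) M ∧ e ∉ M)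

/-- Two vertices are `b`-flexibly connected if there is a path between them all of
whose edges are `b`-flexible. -/
def SimpleGraph.BFlexConn (G : SimpleGraph V) (b : V → ℕ) (u v : V) : Prop :=
  ∃ p : G.Walk u v, p.IsPath ∧ ∀ e ∈ p.edges, G.IsBFlexible b e

/-- The relation `∼_{b,α}` (`α = true` is `+`, `α = false` is `-`): `u ∼_{b,α} v` iff
`u = v`, or `u` and `v` are `b`-flexibly connected and `G` has no
`(b + χ_u + χ_v)`-factor (for `α = +`), resp. no `(b - χ_u - χ_v)`-factor
(for `α = -`). -/
def SimpleGraph.BSim (G : SimpleGraph V) (b : V → ℕ) (α : Bool) (u v : V) : Prop :=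
  u = v ∨ (G.BFlexConn b u v ∧
    ¬ ∃ M, G.IsBFactor
      (fun w => (b w : ℤ) + (if α then 1 else -1) *
        ((if w = u then 1 else 0) + (if w = v then 1 else 0))) M)

/-- The bidirected graph `G^M`: the edges of `G`, where both ends of every edge in `M`
get sign `-` (= `false`) and both ends of every edge not in `M` get sign `+`
(= `true`). -/
noncomputable def SimpleGraph.toBidir (G : SimpleGraph V) (M : Finset (Sym2 V)) :
    BidirGraph V G.edgeSet where
  fst e := (Quot.out e.1).1
  snd e := (Quot.out e.1).2
  sgnFst e := if e.1 ∈ M then false else true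
  sgnSnd e := if e.1 ∈ M then false else true

set_option linter.unusedSectionVars false

namespace BFactorAux


variable {V : Type*} [DecidableEq V]

def iB (s : Bool) : ℤ := if s then 1 else -1

@[simp] lemma iB_not (s : Bool) : iB (!s) = - iB s := by cases s <;> simp [iB]

lemma iB_ne_zero (s : Bool) : iB s ≠ 0 := by cases s <;> simp [iB]

def esgn (M : Finset (Sym2 V)) (e : Sym2 V) : Bool := !(decide (e ∈ M))

lemma esgn_eq_false_iff {M : Finset (Sym2 V)} {e : Sym2 V} : esgn M e = false ↔ e ∈ M := by
  simp [esgn]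

lemma esgn_eq_true_iff {M : Finset (Sym2 V)} {e : Sym2 V} : esgn M e = true ↔ e ∉ M := by
  simp [esgn]

def imb (M S : Finset (Sym2 V)) (w : V) : ℤ :=
  ∑ e ∈ S.filter (fun e => w ∈ e), iB (esgn M e)

lemma imb_insert (M : Finset (Sym2 V)) {S : Finset (Sym2 V)} {e : Sym2 V} (he : e ∉ S) (w : V) :
    imb M (insert e S) w = (if w ∈ e then iB (esgn M e) else 0) + imb M S w := by
  unfold imb
  rw [Finset.filter_insert]
  split
  · rw [Finset.sum_insert (by simp only [Finset.mem_filter]; tauto)]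
  · rw [zero_add]

lemma imb_erase (M : Finset (Sym2 V)) {S : Finset (Sym2 V)} {e : Sym2 V} (he : e ∈ S) (w : V) :
    imb M (S.erase e) w = imb M S w - (if w ∈ e then iB (esgn M e) else 0) := by
  have h1 : S = insert e (S.erase e) := (Finset.insert_erase he).symm
  have h2 := imb_insert M (Finset.notMem_erase e S) w
  rw [← h1] at h2
  omega

lemma card_symmDiff_filter (M S : Finset (Sym2 V)) (w : V) :
    (((symmDiff M S).filter (fun e => w ∈ e)).card : ℤ)
      = ((M.filter (fun e => w ∈ e)).card : ℤ) + imb M S w := by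
  set p : Sym2 V → Prop := fun e => w ∈ e with hp
  have hfil : (symmDiff M S).filter p = symmDiff (M.filter p) (S.filter p) := by
    ext x; simp only [Finset.mem_symmDiff, Finset.mem_filter]; tauto
  set A := M.filter p
  set B := S.filter p
  have hAB : symmDiff A B = (A \ B) ∪ (B \ A) := by
    ext x; simp only [Finset.mem_symmDiff, Finset.mem_union, Finset.mem_sdiff]
  have hcard : ((symmDiff A B).card : ℤ) = A.card + B.card - 2 * (A ∩ B).card := by
    have h1 := Finset.card_sdiff_add_card_inter A B
    have h2 := Finset.card_sdiff_add_card_inter B A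
    rw [Finset.inter_comm] at h2
    rw [hAB, Finset.card_union_of_disjoint disjoint_sdiff_sdiff]
    push_cast; omega
  -- compute imb as counts
  have himb : imb M S w = (B.filter (fun e => e ∉ M)).card - (B.filter (fun e => e ∈ M)).card := by
    unfold imb
    rw [show S.filter (fun e => w ∈ e) = B from rfl]
    rw [← Finset.sum_filter_add_sum_filter_not B (fun e => e ∈ M)]
    have hone : ∀ e ∈ B.filter (fun e => e ∈ M), iB (esgn M e) = -1 := by
      intro e heB
      have : e ∈ M := (Finset.mem_filter.mp heB).2
      rw [esgn_eq_false_iff.mpr this]; rfl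
    have htwo : ∀ e ∈ B.filter (fun e => e ∉ M), iB (esgn M e) = 1 := by
      intro e heB
      have : e ∉ M := (Finset.mem_filter.mp heB).2
      rw [esgn_eq_true_iff.mpr this]; rfl
    rw [Finset.sum_congr rfl hone, Finset.sum_congr rfl htwo]
    simp; ring
  have hint : A ∩ B = B.filter (fun e => e ∈ M) := by
    ext x
    simp only [Finset.mem_inter, Finset.mem_filter, A, B]
    tauto
  have hsplit : (B.filter (fun e => e ∉ M)).card + (B.filter (fun e => e ∈ M)).card = B.card := by
    rw [add_comm]
    exact Finset.card_filter_add_card_filter_not (p := fun e => e ∈ M)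
  rw [hfil, hcard, himb, ← hint] at *
  omega


lemma isBFactor_symmDiff {G : SimpleGraph V} {b : V → ℤ} {M : Finset (Sym2 V)}
    (hM : G.IsBFactor b M) {S : Finset (Sym2 V)} (hS : ↑S ⊆ G.edgeSet) :
    G.IsBFactor (fun w => b w + imb M S w) (symmDiff M S) := by
  constructor
  · intro e he
    simp only [Finset.coe_symmDiff, Set.mem_symmDiff] at he
    rcases he with ⟨h, -⟩ | ⟨h, -⟩
    · exact hM.1 h
    · exact hS h
  · intro w
    rw [card_symmDiff_filter, hM.2 w]

lemma imb_symmDiff_eq {G : SimpleGraph V} {b c : V → ℤ} {M N : Finset (Sym2 V)}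
    (hM : G.IsBFactor b M) (hN : G.IsBFactor c N) (w : V) :
    imb M (symmDiff M N) w = c w - b w := by
  have h := card_symmDiff_filter M (symmDiff M N) w
  rw [symmDiff_symmDiff_cancel_left, hM.2 w, hN.2 w] at h
  omega

lemma symmDiff_coe_subset_edgeSet {G : SimpleGraph V} {M N : Finset (Sym2 V)}
    (hM : ↑M ⊆ G.edgeSet) (hN : ↑N ⊆ G.edgeSet) : ↑(symmDiff M N) ⊆ G.edgeSet := by
  intro e he
  simp only [Finset.coe_symmDiff, Set.mem_symmDiff] at he
  rcases he with ⟨h, -⟩ | ⟨h, -⟩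
  · exact hM h
  · exact hN h

/-- Alternating trails in `G` w.r.t. `M`, from `x` to `y`, with first-edge sign `β`
and last-edge sign `γ`; the list of (distinct) edges is recorded. -/
inductive AltTrail (G : SimpleGraph V) (M : Finset (Sym2 V)) :
    V → V → Bool → Bool → List (Sym2 V) → Prop
  | single {x y : V} {e : Sym2 V} (he : e ∈ G.edgeSet) (hxy : e = s(x, y)) :
      AltTrail G M x y (esgn M e) (esgn M e) [e]
  | cons {x w y : V} {γ : Bool} {e : Sym2 V} {L : List (Sym2 V)}
      (he : e ∈ G.edgeSet) (hxy : e = s(x, w)) (hnm : e ∉ L)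
      (hL : AltTrail G M w y (!(esgn M e)) γ L) :
      AltTrail G M x y (esgn M e) γ (e :: L)

lemma AltTrail.ne_nil {G : SimpleGraph V} {M : Finset (Sym2 V)} {x y β γ L}
    (h : AltTrail G M x y β γ L) : L ≠ [] := by
  cases h <;> simp

lemma AltTrail.nodup {G : SimpleGraph V} {M : Finset (Sym2 V)} {x y β γ L}
    (h : AltTrail G M x y β γ L) : L.Nodup := by
  induction h with
  | single => simp
  | cons he hxy hnm hL ih => exact List.nodup_cons.mpr ⟨hnm, ih⟩

lemma indicator_helper {x y w : V} {e : Sym2 V} (hxy : e = s(x, y)) (hne : x ≠ y) (c : ℤ) :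
    (if w ∈ e then c else 0)
      = c * (if w = x then 1 else 0) + c * (if w = y then 1 else 0) := by
  subst hxy
  by_cases hx : w = x <;> by_cases hy : w = y <;>
    simp [Sym2.mem_iff, hx, hy, hne, hne.symm]

lemma ne_of_edge {G : SimpleGraph V} {e : Sym2 V} {x y : V} (he : e ∈ G.edgeSet)
    (hxy : e = s(x, y)) : x ≠ y := by
  have := G.not_isDiag_of_mem_edgeSet (hxy ▸ he)
  simpa [Sym2.mk_isDiag_iff] using this

lemma AltTrail.imb_toFinset {G : SimpleGraph V} {M : Finset (Sym2 V)} {x y β γ L}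
    (h : AltTrail G M x y β γ L) (w : V) :
    imb M L.toFinset w
      = iB β * (if w = x then 1 else 0) + iB γ * (if w = y then 1 else 0) := by
  induction h with
  | @single x y e he hxy =>
      have hne := ne_of_edge he hxy
      have h0 : imb M ({e} : Finset (Sym2 V)) w = (if w ∈ e then iB (esgn M e) else 0) + 0 := by
        have := imb_insert M (S := (∅ : Finset (Sym2 V))) (e := e) (by simp) w
        simpa [imb] using this
      simp only [List.toFinset_cons, List.toFinset_nil, insert_empty_eq] at *
      rw [h0, add_zero, indicator_helper hxy hne]
  | @cons x w' y γ e L he hxy hnm hL ih =>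
      have hne := ne_of_edge he hxy
      have hnotin : e ∉ L.toFinset := by simpa using hnm
      rw [List.toFinset_cons, imb_insert M hnotin, ih, indicator_helper hxy hne]
      simp only [iB_not]
      ring

lemma AltTrail.coe_toFinset_subset {G : SimpleGraph V} {M : Finset (Sym2 V)} {x y β γ L}
    (h : AltTrail G M x y β γ L) : ↑L.toFinset ⊆ G.edgeSet := by
  induction h with
  | single he hxy => simpa using he
  | cons he hxy hnm hL ih =>
      intro f hf
      simp only [List.toFinset_cons, Finset.coe_insert, Set.mem_insert_iff] at hf
      rcases hf with rfl | hf
      · exact he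
      · exact ih hf

lemma factor_of_altTrail {G : SimpleGraph V} {b : V → ℤ} {M : Finset (Sym2 V)}
    (hM : G.IsBFactor b M) {x y β γ L} (h : AltTrail G M x y β γ L) :
    G.IsBFactor
      (fun w => b w + iB β * (if w = x then 1 else 0) + iB γ * (if w = y then 1 else 0))
      (symmDiff M L.toFinset) := by
  have := isBFactor_symmDiff hM h.coe_toFinset_subset
  refine ⟨this.1, fun w => ?_⟩
  have h2 := this.2 w
  dsimp only at h2 ⊢
  rw [h2, h.imb_toFinset w]
  ring

lemma exists_edge_at {M D : Finset (Sym2 V)} {x y : V} {β γ : Bool}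
    (hside : x ≠ y ∨ β = γ)
    (himb : ∀ w, imb M D w
      = iB β * (if w = x then 1 else 0) + iB γ * (if w = y then 1 else 0)) :
    ∃ e ∈ D, x ∈ e ∧ esgn M e = β := by
  by_contra hcon
  push_neg at hcon
  have hall : ∀ e ∈ D.filter (fun e => x ∈ e), iB (esgn M e) = - iB β := by
    intro e he
    rw [Finset.mem_filter] at he
    have := hcon e he.1 he.2
    have : esgn M e = !β := by
      cases hb : esgn M e <;> cases β <;> simp_all
    rw [this, iB_not]
  have hsum : imb M D x = ((D.filter (fun e => x ∈ e)).card : ℤ) * (- iB β) := by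
    unfold imb
    rw [Finset.sum_congr rfl hall, Finset.sum_const, nsmul_eq_mul]
  have hval := himb x
  rw [hsum] at hval
  rcases eq_or_ne x y with rfl | hxy
  · have hbg : β = γ := hside.resolve_left (by simp)
    subst hbg
    simp only [if_pos rfl] at hval
    cases β <;> simp [iB] at hval <;> omega
  · simp only [if_pos rfl, if_neg hxy] at hval
    cases β <;> simp [iB] at hval <;> omega

lemma exists_altTrail_aux {G : SimpleGraph V} {M : Finset (Sym2 V)} :
    ∀ (n : ℕ) (D : Finset (Sym2 V)), D.card = n → ∀ (x y : V) (β γ : Bool),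
      ↑D ⊆ G.edgeSet → (x ≠ y ∨ β = γ) →
      (∀ w, imb M D w
        = iB β * (if w = x then 1 else 0) + iB γ * (if w = y then 1 else 0)) →
      ∃ L, AltTrail G M x y β γ L ∧ ∀ e ∈ L, e ∈ D := by
  intro n
  induction n using Nat.strong_induction_on with
  | _ n ih =>
    intro D hcard x y β γ hDsub hside himb
    obtain ⟨e, heD, hxe, hsgn⟩ := exists_edge_at hside himb
    have heE : e ∈ G.edgeSet := hDsub heD
    obtain ⟨z, hez⟩ := Sym2.mem_iff_exists.mp hxe
    have hxz : x ≠ z := ne_of_edge heE hez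
    have himb' : ∀ w, imb M (D.erase e) w
        = iB (!β) * (if w = z then 1 else 0) + iB γ * (if w = y then 1 else 0) := by
      intro w
      rw [imb_erase M heD, himb w, indicator_helper hez hxz, hsgn, iB_not]
      ring
    by_cases hstop : z = y ∧ β = γ
    · obtain ⟨hzy, hbg⟩ := hstop
      subst hzy; subst hbg
      refine ⟨[e], ?_, by simp [heD]⟩
      have := AltTrail.single (G := G) (M := M) heE hez
      rwa [hsgn] at this
    · have hside' : z ≠ y ∨ (!β) = γ := by
        by_cases hzy : z = y
        · right
          have hbg : β ≠ γ := fun h => hstop ⟨hzy, h⟩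
          cases β <;> cases γ <;> simp only [Bool.not_true, Bool.not_false] <;>
            first | rfl | exact absurd rfl hbg
        · left; exact hzy
      have hlt : (D.erase e).card < n := by
        rw [← hcard]
        exact Finset.card_erase_lt_of_mem heD
      obtain ⟨L, hL, hLsub⟩ := ih _ hlt (D.erase e) rfl z y (!β) γ
        (fun f hf => hDsub (Finset.mem_coe.mpr (Finset.mem_of_mem_erase (Finset.mem_coe.mp hf))))
        hside' himb'
      have henL : e ∉ L := fun h => Finset.notMem_erase e D (hLsub e h)
      have hcons := AltTrail.cons heE hez henL (hsgn ▸ hL)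
      rw [hsgn] at hcons
      refine ⟨e :: L, hcons, ?_⟩
      intro f hf
      rcases List.mem_cons.mp hf with rfl | hf
      · exact heD
      · exact Finset.mem_of_mem_erase (hLsub f hf)

lemma exists_altTrail {G : SimpleGraph V} {M D : Finset (Sym2 V)} {x y : V} {β γ : Bool}
    (hDsub : ↑D ⊆ G.edgeSet) (hside : x ≠ y ∨ β = γ)
    (himb : ∀ w, imb M D w
      = iB β * (if w = x then 1 else 0) + iB γ * (if w = y then 1 else 0)) :
    ∃ L, AltTrail G M x y β γ L ∧ ∀ e ∈ L, e ∈ D :=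
  exists_altTrail_aux D.card D rfl x y β γ hDsub hside himb


section Translate

variable {G : SimpleGraph V} {M : Finset (Sym2 V)}

lemma toBidir_mk (e : G.edgeSet) :
    s((G.toBidir M).fst e, (G.toBidir M).snd e) = (e : Sym2 V) := by
  show Sym2.mk _ _ = _
  exact Quot.out_eq _

lemma step_mk (st : G.edgeSet × Bool) :
    s((G.toBidir M).stepTail st, (G.toBidir M).stepHead st) = (st.1 : Sym2 V) := by
  obtain ⟨e, d⟩ := st
  cases d
  · rw [show (G.toBidir M).stepTail (e, false) = (G.toBidir M).snd e from rfl,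
      show (G.toBidir M).stepHead (e, false) = (G.toBidir M).fst e from rfl,
      Sym2.eq_swap]
    exact toBidir_mk e
  · exact toBidir_mk e

lemma stepTailSign_eq (st : G.edgeSet × Bool) :
    (G.toBidir M).stepTailSign st = esgn M st.1.1 := by
  obtain ⟨e, d⟩ := st
  cases d <;>
    · show (if (e : Sym2 V) ∈ M then false else true) = _
      by_cases h : (e : Sym2 V) ∈ M <;> simp [h, esgn]

lemma stepHeadSign_eq (st : G.edgeSet × Bool) :
    (G.toBidir M).stepHeadSign st = esgn M st.1.1 := by
  obtain ⟨e, d⟩ := st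
  cases d <;>
    · show (if (e : Sym2 V) ∈ M then false else true) = _
      by_cases h : (e : Sym2 V) ∈ M <;> simp [h, esgn]

lemma exists_dir {e : G.edgeSet} {x y : V} (hxy : (e : Sym2 V) = s(x, y)) (hne : x ≠ y) :
    ∃ d : Bool, (G.toBidir M).stepTail (e, d) = x ∧ (G.toBidir M).stepHead (e, d) = y := by
  have h := toBidir_mk (M := M) e
  rw [hxy, Sym2.eq_iff] at h
  rcases h with ⟨h1, h2⟩ | ⟨h1, h2⟩
  · exact ⟨true, h1, h2⟩
  · exact ⟨false, h2, h1⟩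

lemma ditrail_of_altTrail {L : List (Sym2 V)} {x y : V} {β γ : Bool}
    (h : AltTrail G M x y β γ L) :
    ∃ L' : List (G.edgeSet × Bool), (G.toBidir M).IsABDitrail β γ x y L' ∧
      L'.map (fun st => st.1.1) = L := by
  induction h with
  | @single x y e he hxy =>
      obtain ⟨d, hd1, hd2⟩ := exists_dir (M := M) (e := ⟨e, he⟩) hxy (ne_of_edge he hxy)
      refine ⟨[(⟨e, he⟩, d)], ⟨⟨⟨?_, ?_, ?_, ?_⟩, ?_, ?_⟩, ?_⟩, by simp⟩
      · exact List.isChain_singleton _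
      · simp
      · intro st hst
        simp only [List.head?_cons, Option.some.injEq] at hst
        rw [← hst]; exact hd1
      · intro st hst
        simp only [List.getLast?_singleton, Option.some.injEq] at hst
        rw [← hst]; exact hd2
      · simp
      · exact List.isChain_singleton _
      · refine Or.inr ⟨by simp, ?_, ?_⟩
        · intro st hst
          simp only [List.head?_cons, Option.some.injEq] at hst
          rw [← hst, stepTailSign_eq]
        · intro st hst
          simp only [List.getLast?_singleton, Option.some.injEq] at hst
          rw [← hst, stepHeadSign_eq]
  | @cons x w y γ e L he hxy hnm hL ih =>
      obtain ⟨T, hT, hTmap⟩ := ih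
      obtain ⟨⟨hwalk, hnodup, hsgnchain⟩, hor⟩ := hT
      have hTne : T ≠ [] := by
        intro hc; subst hc
        exact hL.ne_nil hTmap.symm
      rcases hor with ⟨hc, -⟩ | ⟨-, hhead, hlast⟩
      · exact absurd hc hTne
      obtain ⟨d, hd1, hd2⟩ := exists_dir (M := M) (e := ⟨e, he⟩) hxy (ne_of_edge he hxy)
      set st : G.edgeSet × Bool := (⟨e, he⟩, d) with hst
      obtain ⟨a, T', rfl⟩ : ∃ a T', T = a :: T' := by
        rcases T with _ | ⟨a, T'⟩
        · exact absurd rfl hTne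
        · exact ⟨a, T', rfl⟩
      refine ⟨st :: a :: T', ⟨⟨⟨?_, ?_, ?_, ?_⟩, ?_, ?_⟩, ?_⟩, by simp [hTmap, hst]⟩
      · refine List.isChain_cons.mpr ⟨?_, hwalk.1⟩
        intro b hb
        simp only [List.head?_cons, Option.mem_def, Option.some.injEq] at hb
        rw [hd2, ← hb]
        exact (hwalk.2.2.1 a rfl).symm
      · simp
      · intro s' hs'
        simp only [List.head?_cons, Option.some.injEq] at hs'
        rw [← hs']; exact hd1
      · intro s' hs'
        rw [List.getLast?_cons_cons] at hs'
        exact hwalk.2.2.2 s' hs'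
      · rw [List.map_cons, List.nodup_cons]
        refine ⟨?_, hnodup⟩
        intro hc
        apply hnm
        rw [← hTmap]
        rcases List.mem_map.mp hc with ⟨p, hp, hpe⟩
        exact List.mem_map.mpr ⟨p, hp, by rw [hpe]⟩
      · refine List.isChain_cons.mpr ⟨?_, hsgnchain⟩
        intro b hb
        simp only [List.head?_cons, Option.mem_def, Option.some.injEq] at hb
        rw [stepHeadSign_eq, ← hb, hhead a rfl]
        cases esgn M e <;> simp [hst]
      · refine Or.inr ⟨by simp, ?_, ?_⟩
        · intro s' hs'
          simp only [List.head?_cons, Option.some.injEq] at hs'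
          rw [← hs', stepTailSign_eq]
        · intro s' hs'
          rw [List.getLast?_cons_cons] at hs'
          exact hlast s' hs'

lemma altTrail_of_ditrail :
    ∀ (L' : List (G.edgeSet × Bool)) (x y : V) (β γ : Bool), L' ≠ [] →
      (G.toBidir M).IsDitrail x y L' →
      (∀ st, L'.head? = some st → (G.toBidir M).stepTailSign st = β) →
      (∀ st, L'.getLast? = some st → (G.toBidir M).stepHeadSign st = γ) →
      AltTrail G M x y β γ (L'.map (fun st => st.1.1)) := by
  intro L'
  induction L' with
  | nil => intro x y β γ h; exact absurd rfl h
  | cons st rest ih =>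
    intro x y β γ _ hdit hhead hlast
    obtain ⟨⟨hchain, hnil, hhd, hlst⟩, hnodup, hsgn⟩ := hdit
    have hx : (G.toBidir M).stepTail st = x := hhd st rfl
    have hmk : (st.1 : Sym2 V) = s(x, (G.toBidir M).stepHead st) := by
      rw [← hx]; exact (step_mk st).symm
    have hβ : esgn M st.1.1 = β := by rw [← stepTailSign_eq st]; exact hhead st rfl
    rcases rest with _ | ⟨a, t⟩
    · have hy : (G.toBidir M).stepHead st = y := hlst st rfl
      have hγ : esgn M st.1.1 = γ := by rw [← stepHeadSign_eq st]; exact hlast st rfl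
      have hbg : γ = β := by rw [← hβ, ← hγ]
      have h1 := AltTrail.single (G := G) (M := M) st.1.2 (hy ▸ hmk)
      rw [hβ] at h1
      rw [hbg]
      exact h1
    · have hR := List.isChain_cons_cons.mp hchain
      have hS := List.isChain_cons_cons.mp hsgn
      have htail : (G.toBidir M).stepTail a = (G.toBidir M).stepHead st := hR.1.symm
      have hasgn : (G.toBidir M).stepTailSign a = !(esgn M st.1.1) := by
        have h := hS.1
        rw [stepHeadSign_eq] at h
        exact Bool.eq_not_iff.mpr (Ne.symm h)
      have hdit' : (G.toBidir M).IsDitrail ((G.toBidir M).stepHead st) y (a :: t) := by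
        refine ⟨⟨hR.2, by simp, ?_, ?_⟩, (List.nodup_cons.mp hnodup).2, hS.2⟩
        · intro s' hs'
          simp only [List.head?_cons, Option.some.injEq] at hs'
          rw [← hs']; exact htail
        · intro s' hs'
          exact hlst s' (by rw [List.getLast?_cons_cons]; exact hs')
      have hIH := ih ((G.toBidir M).stepHead st) y (!(esgn M st.1.1)) γ (by simp) hdit'
        (by intro s' hs'
            simp only [List.head?_cons, Option.some.injEq] at hs'
            rw [← hs']; exact hasgn)
        (by intro s' hs'
            exact hlast s' (by rw [List.getLast?_cons_cons]; exact hs'))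
      have hnotmem : (st.1 : Sym2 V) ∉ (a :: t).map (fun p => p.1.1) := by
        intro hc
        rcases List.mem_map.mp hc with ⟨p, hp, hpe⟩
        have : p.1 = st.1 := Subtype.ext hpe
        exact (List.nodup_cons.mp hnodup).1 (this ▸ List.mem_map_of_mem (f := Prod.fst) hp)
      have := AltTrail.cons (G := G) (M := M) st.1.2 hmk hnotmem hIH
      rw [hβ] at this
      exact this

lemma abditrail_nonempty {α γ : Bool} {x y : V} {L' : List (G.edgeSet × Bool)}
    (h : (G.toBidir M).IsABDitrail α γ x y L') (hag : α = γ) : L' ≠ [] := by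
  rcases h.2 with ⟨-, hne⟩ | ⟨hne, -⟩
  · exact absurd hag hne
  · exact hne

lemma altTrail_of_abditrail {α γ : Bool} {x y : V} {L' : List (G.edgeSet × Bool)}
    (h : (G.toBidir M).IsABDitrail α γ x y L') (hne : L' ≠ []) :
    AltTrail G M x y α γ (L'.map (fun st => st.1.1)) := by
  rcases h.2 with ⟨he, -⟩ | ⟨-, hh, hl⟩
  · exact absurd he hne
  · exact altTrail_of_ditrail L' x y α γ hne h.1 hh hl

lemma factor_of_abditrail {b : V → ℤ} (hM : G.IsBFactor b M) {α : Bool} {x y : V}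
    {L' : List (G.edgeSet × Bool)} (h : (G.toBidir M).IsABDitrail α α x y L') :
    ∃ N, G.IsBFactor
      (fun w => b w + iB α * ((if w = x then 1 else 0) + (if w = y then 1 else 0))) N := by
  have hne := abditrail_nonempty h rfl
  have halt := altTrail_of_abditrail h hne
  have hf := factor_of_altTrail hM halt
  exact ⟨_, hf.1, fun w => (hf.2 w).trans (by ring)⟩

lemma abditrail_of_factor {b : V → ℤ} (hM : G.IsBFactor b M) {α : Bool} {u v : V}
    (huv : u ≠ v) {N : Finset (Sym2 V)}
    (hN : G.IsBFactor
      (fun w => b w + iB α * ((if w = u then 1 else 0) + (if w = v then 1 else 0))) N) :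
    ∃ L', (G.toBidir M).IsABDitrail α α u v L' := by
  have hsub : ↑(symmDiff M N) ⊆ G.edgeSet := symmDiff_coe_subset_edgeSet hM.1 hN.1
  have himb : ∀ w, imb M (symmDiff M N) w
      = iB α * (if w = u then 1 else 0) + iB α * (if w = v then 1 else 0) := by
    intro w
    rw [imb_symmDiff_eq hM hN w]
    ring
  obtain ⟨T, hT, -⟩ := exists_altTrail hsub (Or.inl huv) himb
  obtain ⟨L', hL', -⟩ := ditrail_of_altTrail hT
  exact ⟨L', hL'⟩

lemma flexible_of_circular {b : V → ℕ} (hM : G.IsBFactor (fun w => (b w : ℤ)) M)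
    {e : Sym2 V} (he : e ∈ G.edgeSet) (hcirc : (G.toBidir M).IsCircular ⟨e, he⟩) :
    G.IsBFlexible b e := by
  obtain ⟨v, α, L', hdit, d, hmem⟩ := hcirc
  have hne : L' ≠ [] := by intro hc; rw [hc] at hmem; simp at hmem
  have halt := altTrail_of_abditrail hdit hne
  have hfac := factor_of_altTrail hM halt
  set N := symmDiff M (L'.map (fun st => st.1.1)).toFinset with hNdef
  have hN : G.IsBFactor (fun w => (b w : ℤ)) N :=
    ⟨hfac.1, fun w => (hfac.2 w).trans (by rw [iB_not]; ring)⟩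
  have heL : e ∈ (L'.map (fun st => st.1.1)).toFinset :=
    List.mem_toFinset.mpr (List.mem_map.mpr ⟨(⟨e, he⟩, d), hmem, rfl⟩)
  by_cases hem : e ∈ M
  · have henN : e ∉ N := by
      simp [hNdef, Finset.mem_symmDiff, hem, heL]
    exact ⟨⟨M, hM, hem⟩, ⟨N, hN, henN⟩⟩
  · have heN : e ∈ N := by
      rw [hNdef, Finset.mem_symmDiff]
      exact Or.inr ⟨heL, hem⟩
    exact ⟨⟨N, hN, heN⟩, ⟨M, hM, hem⟩⟩

lemma circular_of_flexible {b : V → ℕ} (hM : G.IsBFactor (fun w => (b w : ℤ)) M)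
    {e : Sym2 V} (he : e ∈ G.edgeSet) (hflex : G.IsBFlexible b e) :
    (G.toBidir M).IsCircular ⟨e, he⟩ := by
  obtain ⟨x, y, rfl⟩ : ∃ x y, e = s(x, y) :=
    ⟨(Quot.out e).1, (Quot.out e).2, (Quot.out_eq e).symm⟩
  have hne : x ≠ y := ne_of_edge he rfl
  by_cases hem : s(x, y) ∈ M
  · obtain ⟨-, N, hN, heN⟩ := hflex
    have heD : s(x, y) ∈ symmDiff M N := Finset.mem_symmDiff.mpr (Or.inl ⟨hem, heN⟩)
    have hesgn : esgn M s(x, y) = false := esgn_eq_false_iff.mpr hem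
    have himb' : ∀ w, imb M ((symmDiff M N).erase s(x, y)) w
        = iB true * (if w = x then 1 else 0) + iB true * (if w = y then 1 else 0) := by
      intro w
      rw [imb_erase M heD, imb_symmDiff_eq hM hN, hesgn,
        indicator_helper (e := s(x, y)) rfl hne]
      simp [iB]; split_ifs <;> ring
    obtain ⟨T, hT, hTsub⟩ := exists_altTrail
      (fun f hf => symmDiff_coe_subset_edgeSet hM.1 hN.1
        (Finset.mem_coe.mpr (Finset.mem_of_mem_erase (Finset.mem_coe.mp hf))))
      (Or.inl hne) himb'
    have henT : s(x, y) ∉ T := fun h => Finset.notMem_erase _ _ (hTsub _ h)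
    have hT' : AltTrail G M x y (!(esgn M s(x, y))) true T := by
      rw [hesgn, Bool.not_false]; exact hT
    have hclosed := AltTrail.cons (G := G) (M := M) he Sym2.eq_swap henT hT'
    rw [hesgn] at hclosed
    obtain ⟨L', hL', hLmap⟩ := ditrail_of_altTrail hclosed
    refine ⟨y, false, L', by simpa using hL', ?_⟩
    have : s(x, y) ∈ L'.map (fun st => st.1.1) := by rw [hLmap]; exact List.mem_cons_self
    rcases List.mem_map.mp this with ⟨p, hp, hpe⟩
    refine ⟨p.2, ?_⟩
    have hq : (⟨s(x, y), he⟩ : G.edgeSet) = p.1 := Subtype.ext hpe.symm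
    rw [hq]
    exact hp
  · obtain ⟨⟨N, hN, heN⟩, -⟩ := hflex
    have heD : s(x, y) ∈ symmDiff M N := Finset.mem_symmDiff.mpr (Or.inr ⟨heN, hem⟩)
    have hesgn : esgn M s(x, y) = true := esgn_eq_true_iff.mpr hem
    have himb' : ∀ w, imb M ((symmDiff M N).erase s(x, y)) w
        = iB false * (if w = x then 1 else 0) + iB false * (if w = y then 1 else 0) := by
      intro w
      rw [imb_erase M heD, imb_symmDiff_eq hM hN, hesgn,
        indicator_helper (e := s(x, y)) rfl hne]
      simp [iB]; split_ifs <;> ring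
    obtain ⟨T, hT, hTsub⟩ := exists_altTrail
      (fun f hf => symmDiff_coe_subset_edgeSet hM.1 hN.1
        (Finset.mem_coe.mpr (Finset.mem_of_mem_erase (Finset.mem_coe.mp hf))))
      (Or.inl hne) himb'
    have henT : s(x, y) ∉ T := fun h => Finset.notMem_erase _ _ (hTsub _ h)
    have hT' : AltTrail G M x y (!(esgn M s(x, y))) false T := by
      rw [hesgn, Bool.not_true]; exact hT
    have hclosed := AltTrail.cons (G := G) (M := M) he Sym2.eq_swap henT hT'
    rw [hesgn] at hclosed
    obtain ⟨L', hL', hLmap⟩ := ditrail_of_altTrail hclosed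
    refine ⟨y, true, L', by simpa using hL', ?_⟩
    have : s(x, y) ∈ L'.map (fun st => st.1.1) := by rw [hLmap]; exact List.mem_cons_self
    rcases List.mem_map.mp this with ⟨p, hp, hpe⟩
    refine ⟨p.2, ?_⟩
    have hq : (⟨s(x, y), he⟩ : G.edgeSet) = p.1 := Subtype.ext hpe.symm
    rw [hq]
    exact hp

lemma toList_of_walk : ∀ {u v : V} (p : G.Walk u v),
    ∃ L : List (G.edgeSet × Bool), (G.toBidir M).IsWalk u v L ∧
      L.map (G.toBidir M).stepHead = p.support.tail ∧
      L.map (fun st => st.1.1) = p.edges := by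
  intro u v p
  induction p with
  | nil =>
      refine ⟨[], ⟨?_, fun _ => rfl, ?_, ?_⟩, ?_, ?_⟩ <;> simp [List.Chain']
  | @cons u w v h p ih =>
      obtain ⟨L, hw, hsup, hedg⟩ := ih
      have he : s(u, w) ∈ G.edgeSet := G.mem_edgeSet.mpr h
      obtain ⟨d, hd1, hd2⟩ := exists_dir (M := M) (e := ⟨s(u, w), he⟩) rfl h.ne
      refine ⟨(⟨s(u, w), he⟩, d) :: L, ⟨?_, by simp, ?_, ?_⟩, ?_, ?_⟩
      · refine List.isChain_cons.mpr ⟨?_, hw.1⟩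
        intro b hb
        rw [hd2]
        exact (hw.2.2.1 b hb).symm
      · intro s' hs'
        simp only [List.head?_cons, Option.some.injEq] at hs'
        rw [← hs']; exact hd1
      · intro s' hs'
        rcases L with _ | ⟨a, t⟩
        · simp only [List.getLast?_singleton, Option.some.injEq] at hs'
          rw [← hs', hd2]
          exact hw.2.1 rfl
        · rw [List.getLast?_cons_cons] at hs'
          exact hw.2.2.2 s' hs'
      · rw [List.map_cons, hd2, hsup, SimpleGraph.Walk.support_cons, List.tail_cons,
          ← SimpleGraph.Walk.support_eq_cons]
      · rw [List.map_cons, hedg, SimpleGraph.Walk.edges_cons]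

lemma walk_of_list : ∀ (L : List (G.edgeSet × Bool)) (u v : V),
    (G.toBidir M).IsWalk u v L →
    ∃ p : G.Walk u v, p.support = u :: L.map (G.toBidir M).stepHead ∧
      ∀ e ∈ p.edges, ∃ st ∈ L, st.1.1 = e := by
  intro L
  induction L with
  | nil =>
      intro u v hw
      have huv : u = v := hw.2.1 rfl
      subst huv
      exact ⟨SimpleGraph.Walk.nil, by simp, by simp⟩
  | cons st rest ih =>
      intro u v hw
      obtain ⟨hchain, -, hhd, hlst⟩ := hw
      have hx : (G.toBidir M).stepTail st = u := hhd st rfl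
      have hmk : (st.1 : Sym2 V) = s(u, (G.toBidir M).stepHead st) := by
        rw [← hx]; exact (step_mk st).symm
      have hadj : G.Adj u ((G.toBidir M).stepHead st) := G.mem_edgeSet.mp (hmk ▸ st.1.2)
      have hw' : (G.toBidir M).IsWalk ((G.toBidir M).stepHead st) v rest := by
        refine ⟨(List.isChain_cons.mp hchain).2, ?_, ?_, ?_⟩
        · intro hrest
          subst hrest
          exact hlst st rfl
        · intro s' hs'
          exact ((List.isChain_cons.mp hchain).1 s' hs').symm
        · intro s' hs'
          rcases rest with _ | ⟨a, t⟩
          · simp at hs'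
          · apply hlst s'
            rw [List.getLast?_cons_cons]
            exact hs'
      obtain ⟨p, hsup, hedg⟩ := ih _ v hw'
      refine ⟨SimpleGraph.Walk.cons hadj p, ?_, ?_⟩
      · rw [SimpleGraph.Walk.support_cons, hsup, List.map_cons]
      · intro e hee
        rw [SimpleGraph.Walk.edges_cons, List.mem_cons] at hee
        rcases hee with rfl | hee
        · exact ⟨st, List.mem_cons_self, hmk.symm ▸ rfl⟩
        · obtain ⟨st', hst', hst'e⟩ := hedg e hee
          exact ⟨st', List.mem_cons_of_mem _ hst', hst'e⟩

lemma bflexConn_iff_circConn {b : V → ℕ} (hM : G.IsBFactor (fun w => (b w : ℤ)) M) (u v : V) :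
    G.BFlexConn b u v ↔ (G.toBidir M).CircConn u v := by
  constructor
  · rintro ⟨p, hp, hflex⟩
    obtain ⟨L, hw, hsup, hedg⟩ := toList_of_walk (M := M) p
    refine ⟨L, hw, ?_, ?_⟩
    · have h1 : u :: L.map (G.toBidir M).stepHead = p.support := by
        rw [hsup, ← SimpleGraph.Walk.support_eq_cons]
      rw [h1]
      exact hp.support_nodup
    · intro st hst
      have hee : st.1.1 ∈ p.edges := by
        rw [← hedg]; exact List.mem_map_of_mem hst
      exact circular_of_flexible hM st.1.2 (hflex _ hee)
  · rintro ⟨L, hw, hnd, hcirc⟩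
    obtain ⟨p, hsup, hedg⟩ := walk_of_list L u v hw
    refine ⟨p, ?_, ?_⟩
    · rw [SimpleGraph.Walk.isPath_def, hsup]
      exact hnd
    · intro e hee
      obtain ⟨st, hst, rfl⟩ := hedg e hee
      exact flexible_of_circular hM st.1.2 (hcirc st hst)

end Translate

end BFactorAux

/-- Let `G` be a `b`-factorizable graph, `M` a `b`-factor of `G`,
and `α` a sign. Then for all vertices `u, v`, `u ∼_{b,α} v` holds in `G` iff
`u ∼_α v` holds in the bidirected graph `G^M`. -/
theorem bSim_iff_simRel_toBidir (G : SimpleGraph V) (b : V → ℕ) (M : Finset (Sym2 V))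
    (hM : G.IsBFactor (fun w => (b w : ℤ)) M) (α : Bool) (u v : V) :
    G.BSim b α u v ↔ (G.toBidir M).SimRel α u v := by
  by_cases huv : u = v
  · subst huv
    simp [SimpleGraph.BSim, BidirGraph.SimRel]
  · simp only [SimpleGraph.BSim, BidirGraph.SimRel, huv, false_or]
    constructor
    · rintro ⟨hconn, hnof⟩
      refine ⟨(BFactorAux.bflexConn_iff_circConn hM u v).mp hconn, ?_⟩
      rintro ⟨L, hL | hL⟩
      · apply hnof
        obtain ⟨N, hN⟩ := BFactorAux.factor_of_abditrail hM hL
        exact ⟨N, hN.1, fun w => (hN.2 w).trans (by simp [BFactorAux.iB])⟩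
      · apply hnof
        obtain ⟨N, hN⟩ := BFactorAux.factor_of_abditrail hM hL
        exact ⟨N, hN.1, fun w => (hN.2 w).trans (by simp [BFactorAux.iB]; ring)⟩
    · rintro ⟨hconn, hnod⟩
      refine ⟨(BFactorAux.bflexConn_iff_circConn hM u v).mpr hconn, ?_⟩
      rintro ⟨N, hN⟩
      apply hnod
      have hN' : G.IsBFactor
          (fun w => (b w : ℤ) + BFactorAux.iB α
            * ((if w = u then 1 else 0) + (if w = v then 1 else 0))) N :=
        ⟨hN.1, fun w => (hN.2 w).trans (by simp [BFactorAux.iB])⟩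
      obtain ⟨L, hL⟩ := BFactorAux.abditrail_of_factor hM huv hN'
      exact ⟨L, Or.inl hL⟩
end

section
/- Let G be a b-factorizable graph, where b : V(G) → ℤ≥0. Define a binary relation ∼_{b,−} on V(G) by: u ∼_{b,−} v if and only if u = v, or u and v are b-flexibly connected and G has no (b − χ_u − χ_v)-factor. Then ∼_{b,−} is an equivalence relation on V(G). -/
variable {V : Type*} [Fintype V] [DecidableEq V]

/-- The relation `∼_{b,-}`: `u ∼_{b,-} v` iff `u = v`, or `u` and `v` are `b`-flexibly
connected and `G` has no `(b - χ_u - χ_v)`-factor. -/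
def SimpleGraph.BSimMinus (G : SimpleGraph V) (b : V → ℕ) (u v : V) : Prop :=
  u = v ∨ (G.BFlexConn b u v ∧
    ¬ ∃ M, G.IsBFactor
      (fun w => (b w : ℤ) - (if w = u then 1 else 0) - (if w = v then 1 else 0)) M)


set_option linter.unusedSectionVars false
set_option linter.unusedVariables false
set_option linter.unreachableTactic false
set_option linter.unusedTactic false
set_option maxHeartbeats 1600000

namespace BProof

def sedges (S : List (V × V)) : List (Sym2 V) := S.map (fun p => s(p.1, p.2))

@[simp] lemma sedges_nil : sedges ([] : List (V × V)) = [] := rfl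
@[simp] lemma sedges_cons (p : V × V) (S : List (V × V)) :
    sedges (p :: S) = s(p.1, p.2) :: sedges S := rfl
@[simp] lemma sedges_append (S T : List (V × V)) :
    sedges (S ++ T) = sedges S ++ sedges T := List.map_append

def revP (S : List (V × V)) : List (V × V) := (S.map Prod.swap).reverse

@[simp] lemma sedges_revP (S : List (V × V)) : sedges (revP S) = (sedges S).reverse := by
  simp [revP, sedges, List.map_reverse, Function.comp, Sym2.eq_swap]

def tch (x : V) (S : List (V × V)) : List V := x :: S.map Prod.snd

lemma mem_tch_of_snd {x : V} {S : List (V × V)} {p : V × V} (hp : p ∈ S) :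
    p.2 ∈ tch x S := by
  simp only [tch, List.mem_cons, List.mem_map]
  exact Or.inr ⟨p, hp, rfl⟩

inductive AW (G : SimpleGraph V) (B : Finset (Sym2 V)) : V → V → Bool → Bool → List (V × V) → Prop
  | single {x y : V} {c : Bool} (hadj : G.Adj x y) (hc : s(x,y) ∈ B ↔ c = true) :
      AW G B x y c c [(x, y)]
  | cons {x y z : V} {c d : Bool} {S : List (V × V)} (hadj : G.Adj x y)
      (hc : s(x,y) ∈ B ↔ c = true) (h : AW G B y z (!c) d S) :
      AW G B x z c d ((x, y) :: S)

variable {G : SimpleGraph V} {B : Finset (Sym2 V)}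

lemma AW.ne_nil {x y c d S} (h : AW G B x y c d S) : S ≠ [] := by
  cases h <;> simp

lemma AW.adj_of_mem {x y c d S} (h : AW G B x y c d S) {p : V × V} (hp : p ∈ S) :
    G.Adj p.1 p.2 := by
  induction h with
  | single hadj hc => rcases List.mem_singleton.mp hp with rfl; exact hadj
  | cons hadj hc h ih =>
      rcases List.mem_cons.mp hp with rfl | hp'
      · exact hadj
      · exact ih hp'

lemma AW.edge_mem_edgeSet {x y c d S} (h : AW G B x y c d S) {e : Sym2 V}
    (he : e ∈ sedges S) : e ∈ G.edgeSet := by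
  simp only [sedges, List.mem_map] at he
  obtain ⟨p, hp, rfl⟩ := he
  exact (h.adj_of_mem hp)

lemma AW.fst_mem_tch {x y c d S} (h : AW G B x y c d S) {p : V × V} (hp : p ∈ S) :
    p.1 ∈ tch x S := by
  induction h with
  | single hadj hc =>
      rcases List.mem_singleton.mp hp with rfl; exact List.mem_cons_self
  | @cons a b z c d S hadj hc h ih =>
      rcases List.mem_cons.mp hp with rfl | hp'
      · exact List.mem_cons_self
      · have := ih hp'
        simp only [tch, List.mem_cons, List.map_cons] at this ⊢
        rcases this with h1 | h1
        · exact Or.inr (Or.inl h1)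
        · exact Or.inr (Or.inr h1)

lemma AW.end_mem_tch {x y c d S} (h : AW G B x y c d S) : y ∈ tch x S := by
  induction h with
  | single hadj hc => simp [tch]
  | cons hadj hc h ih =>
      simp only [tch, List.mem_cons, List.map_cons] at ih ⊢
      tauto

lemma AW.mem_of_edge_mem {x y c d S} (h : AW G B x y c d S) {e : Sym2 V}
    (he : e ∈ sedges S) {t : V} (ht : t ∈ e) : t ∈ tch x S := by
  simp only [sedges, List.mem_map] at he
  obtain ⟨p, hp, rfl⟩ := he
  rcases Sym2.mem_iff.mp ht with rfl | rfl
  · exact h.fst_mem_tch hp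
  · exact mem_tch_of_snd hp

lemma AW.append {x y z c d e S T} (h1 : AW G B x y c d S) (h2 : AW G B y z (!d) e T) :
    AW G B x z c e (S ++ T) := by
  induction h1 with
  | single hadj hc => exact AW.cons hadj hc h2
  | cons hadj hc h ih => exact AW.cons hadj hc (ih h2)

lemma AW.revP {x y c d S} (h : AW G B x y c d S) : AW G B y x d c (BProof.revP S) := by
  induction h with
  | @single x y c hadj hc =>
      have : BProof.revP [(x,y)] = [(y,x)] := rfl
      rw [this]
      exact AW.single hadj.symm (by rwa [Sym2.eq_swap])
  | @cons x y z c d S hadj hc h ih =>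
      have hstep : AW G B y x (!(!c)) c [(y, x)] := by
        rw [Bool.not_not]
        exact AW.single hadj.symm (by rwa [Sym2.eq_swap])
      have hres := ih.append hstep
      have : BProof.revP ((x,y) :: S) = BProof.revP S ++ [(y,x)] := by
        simp [BProof.revP]
      rw [this]
      exact hres

/-- Split an alternating trail at a visited vertex. -/
lemma AW.split {x z c d S} (h : AW G B x z c d S) {t : V} (ht : t ∈ tch x S) :
    ∃ S1 S2 d1, S = S1 ++ S2 ∧
      ((S1 = [] ∧ t = x ∧ d1 = !c) ∨ AW G B x t c d1 S1) ∧
      ((S2 = [] ∧ t = z ∧ d1 = d) ∨ AW G B t z (!d1) d S2) := by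
  induction h with
  | @single x y c hadj hc =>
      simp only [tch, List.map_cons, List.map_nil, List.mem_cons, List.mem_singleton] at ht
      rcases ht with rfl | rfl | h'
      · exact ⟨[], [(t,y)], !c, rfl, Or.inl ⟨rfl, rfl, rfl⟩,
          Or.inr (by rw [Bool.not_not]; exact AW.single hadj hc)⟩
      · exact ⟨[(x,t)], [], c, by simp, Or.inr (AW.single hadj hc), Or.inl ⟨rfl, rfl, rfl⟩⟩
      · exact absurd h' (by simp)
  | @cons x y z c d S hadj hc h ih =>
      by_cases hx : t = x
      · subst hx
        exact ⟨[], (t,y) :: S, !c, rfl, Or.inl ⟨rfl, rfl, rfl⟩,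
          Or.inr (by rw [Bool.not_not]; exact AW.cons hadj hc h)⟩
      · by_cases hy : t = y
        · subst hy
          exact ⟨[(x,t)], S, c, rfl, Or.inr (AW.single hadj hc), Or.inr h⟩
        · have ht' : t ∈ tch y S := by
            simp only [tch, List.map_cons, List.mem_cons] at ht ⊢
            rcases ht with h1 | h1 | h1
            · exact absurd h1 hx
            · exact absurd h1 hy
            · exact Or.inr h1
          obtain ⟨S1, S2, d1, hSeq, hpre, hsuf⟩ := ih ht'
          rcases hpre with ⟨rfl, rfl, _⟩ | hpre
          · exact absurd rfl hy
          · exact ⟨(x,y) :: S1, S2, d1, by rw [hSeq]; rfl,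
              Or.inr (AW.cons hadj hc hpre), hsuf⟩

/-- Prefix of a trail up to the first visited vertex satisfying `A`. -/
lemma AW.firsthit {x z c d S} (h : AW G B x z c d S) (A : V → Prop) [DecidablePred A]
    (hex : ∃ t ∈ tch x S, A t) :
    ∃ s S1, A s ∧ (∀ p ∈ S1, ¬ A p.1) ∧ (sedges S1).Sublist (sedges S) ∧
      ((S1 = [] ∧ s = x) ∨ ∃ d1, AW G B x s c d1 S1) := by
  induction h with
  | @single x y c hadj hc =>
      by_cases hAx : A x
      · exact ⟨x, [], hAx, by simp, by simp, Or.inl ⟨rfl, rfl⟩⟩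
      · have hAy : A y := by
          obtain ⟨t, ht, hAt⟩ := hex
          simp only [tch, List.map_cons, List.map_nil, List.mem_cons, List.mem_singleton] at ht
          rcases ht with rfl | rfl | h'
          · exact absurd hAt hAx
          · exact hAt
          · exact absurd h' (by simp)
        exact ⟨y, [(x,y)], hAy, by simpa using hAx, by simp,
          Or.inr ⟨c, AW.single hadj hc⟩⟩
  | @cons x y z c d S hadj hc h ih =>
      by_cases hAx : A x
      · exact ⟨x, [], hAx, by simp, by simp, Or.inl ⟨rfl, rfl⟩⟩
      · by_cases hAy : A y
        · exact ⟨y, [(x,y)], hAy, by simpa using hAx, by simp,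
            Or.inr ⟨c, AW.single hadj hc⟩⟩
        · have hex' : ∃ t ∈ tch y S, A t := by
            obtain ⟨t, ht, hAt⟩ := hex
            simp only [tch, List.map_cons, List.mem_cons] at ht
            rcases ht with rfl | rfl | h1
            · exact absurd hAt hAx
            · exact absurd hAt hAy
            · exact ⟨t, by simp [tch, h1], hAt⟩
          obtain ⟨s, S1, hAs, hfst, hsub, hpre⟩ := ih hex'
          rcases hpre with ⟨rfl, rfl⟩ | ⟨d1, hpre⟩
          · exact absurd hAs hAy
          · refine ⟨s, (x,y) :: S1, hAs, ?_, ?_, Or.inr ⟨d1, AW.cons hadj hc hpre⟩⟩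
            · intro p hp
              rcases List.mem_cons.mp hp with rfl | hp'
              · exact hAx
              · exact hfst p hp'
            · exact List.Sublist.cons₂ _ hsub

lemma mem_revP {p : V × V} {S : List (V × V)} : p ∈ BProof.revP S ↔ p.swap ∈ S := by
  simp only [BProof.revP, List.mem_reverse, List.mem_map]
  constructor
  · rintro ⟨q, hq, rfl⟩; simpa using hq
  · intro h; exact ⟨p.swap, h, by simp⟩

/-- Re-root a closed alternating trail at any visited vertex, with either starting color. -/
lemma AW.rotate {x c C} (h : AW G B x x c (!c) C) {s : V} (hs : s ∈ tch x C) (β : Bool) :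
    ∃ R, AW G B s s β (!β) R ∧ (sedges R).Perm (sedges C) ∧
      (∀ p ∈ R, p ∈ C ∨ p.swap ∈ C) ∧ (∀ p ∈ C, p ∈ R ∨ p.swap ∈ R) := by
  have flip : ∀ (γ : Bool) (R0 : List (V × V)), AW G B s s γ (!γ) R0 →
      (sedges R0).Perm (sedges C) → (∀ p ∈ R0, p ∈ C ∨ p.swap ∈ C) →
      (∀ p ∈ C, p ∈ R0 ∨ p.swap ∈ R0) →
      ∃ R, AW G B s s β (!β) R ∧ (sedges R).Perm (sedges C) ∧
        (∀ p ∈ R, p ∈ C ∨ p.swap ∈ C) ∧ (∀ p ∈ C, p ∈ R ∨ p.swap ∈ R) := by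
    intro γ R0 h0 hperm hmem hmem2
    by_cases hβ : β = γ
    · subst hβ; exact ⟨R0, h0, hperm, hmem, hmem2⟩
    · have hβ' : β = !γ := by revert hβ; cases β <;> cases γ <;> simp
      subst hβ'
      refine ⟨BProof.revP R0, by simpa using h0.revP, ?_, ?_, ?_⟩
      · rw [sedges_revP]; exact (List.reverse_perm _).trans hperm
      · intro p hp
        have : p.swap ∈ R0 := mem_revP.mp hp
        rcases hmem _ this with h1 | h1
        · exact Or.inr (by simpa using h1)
        · exact Or.inl (by simpa using h1)
      · intro p hp
        rcases hmem2 p hp with h1 | h1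
        · exact Or.inr (mem_revP.mpr (by simpa using h1))
        · exact Or.inl (mem_revP.mpr h1)
  obtain ⟨S1, S2, d1, hSeq, hpre, hsuf⟩ := h.split hs
  rcases hpre with ⟨rfl, rfl, rfl⟩ | hpre
  · rcases hsuf with ⟨rfl, -, -⟩ | hsuf
    · exact absurd (by simpa using hSeq) h.ne_nil
    · rw [Bool.not_not] at hsuf
      have hC : S2 = C := by simpa using hSeq.symm
      subst hC
      exact flip c _ hsuf (List.Perm.refl _) (fun p hp => Or.inl hp) (fun p hp => Or.inl hp)
  · rcases hsuf with ⟨rfl, rfl, rfl⟩ | hsuf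
    · rw [List.append_nil] at hSeq
      subst hSeq
      exact flip c _ hpre (List.Perm.refl _) (fun p hp => Or.inl hp) (fun p hp => Or.inl hp)
    · have happ : AW G B s s (!d1) d1 (S2 ++ S1) :=
        hsuf.append (show AW G B x s (!(!c)) d1 S1 by rwa [Bool.not_not])
      refine flip (!d1) (S2 ++ S1) (by simpa using happ) ?_ ?_ ?_
      · rw [hSeq]; simp only [sedges_append]; exact List.perm_append_comm
      · intro p hp
        rw [hSeq]
        rcases List.mem_append.mp hp with h1 | h1
        · exact Or.inl (List.mem_append.mpr (Or.inr h1))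
        · exact Or.inl (List.mem_append.mpr (Or.inl h1))
      · intro p hp
        rw [hSeq] at hp
        rcases List.mem_append.mp hp with h1 | h1
        · exact Or.inl (List.mem_append.mpr (Or.inr h1))
        · exact Or.inl (List.mem_append.mpr (Or.inl h1))

def cntL (B : Finset (Sym2 V)) (L : List (Sym2 V)) (t : V) (c : Bool) : ℕ :=
  L.countP (fun e => decide (t ∈ e ∧ (e ∈ B ↔ c = true)))

lemma cntL_nil (B : Finset (Sym2 V)) (t : V) (c : Bool) : cntL B [] t c = 0 := rfl

lemma cntL_cons (B : Finset (Sym2 V)) (e : Sym2 V) (L : List (Sym2 V)) (t : V) (c : Bool) :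
    cntL B (e :: L) t c = cntL B L t c + if (t ∈ e ∧ (e ∈ B ↔ c = true)) then 1 else 0 := by
  cases c <;> simp [cntL, List.countP_cons]

/-- Incidence-count identity for alternating trails. -/
lemma AW.count {x y c d S} (h : AW G B x y c d S) (t : V) :
    (cntL B (sedges S) t true : ℤ) - cntL B (sedges S) t false =
      (if c then 1 else -1) * (if t = x then 1 else 0) +
      (if d then 1 else -1) * (if t = y then 1 else 0) := by
  induction h with
  | @single x y c hadj hc =>
      have hne : x ≠ y := hadj.ne
      have htmem : t ∈ s(x,y) ↔ (t = x ∨ t = y) := Sym2.mem_iff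
      rw [sedges_cons, sedges_nil, cntL_cons, cntL_cons, cntL_nil, cntL_nil]
      by_cases htx : t = x <;> by_cases hty : t = y <;> cases c <;>
        simp_all <;> omega
  | @cons x y z c d S hadj hc h ih =>
      have hne : x ≠ y := hadj.ne
      have htmem : t ∈ s(x,y) ↔ (t = x ∨ t = y) := Sym2.mem_iff
      rw [sedges_cons, cntL_cons, cntL_cons]
      have hflip : (if (!c) then (1:ℤ) else -1) = -(if c then 1 else -1) := by
        cases c <;> simp
      rw [hflip] at ih
      push_cast
      by_cases htx : t = x <;> by_cases hty : t = y <;> cases c <;> cases d <;>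
        simp_all <;> omega


def cntF (B D : Finset (Sym2 V)) (t : V) (c : Bool) : ℕ :=
  (D.filter (fun e => t ∈ e ∧ (e ∈ B ↔ c = true))).card


/-- Greedy alternating-trail existence in an (almost) balanced edge set. -/
lemma claimG (G : SimpleGraph V) (B : Finset (Sym2 V)) :
    ∀ (D : Finset (Sym2 V)), (∀ e ∈ D, e ∈ G.edgeSet) → ∀ (x w : V) (d ρ : Bool),
    (∀ t : V, (cntF B D t ρ : ℤ) = cntF B D t (!ρ) + (if t = w then 1 else 0)
        + (if d = ρ then 1 else -1) * (if t = x then 1 else 0)) →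
    ∃ S, ((S = [] ∧ x = w ∧ d = !ρ) ∨ AW G B x w d ρ S) ∧
      (sedges S).Nodup ∧ ∀ e ∈ sedges S, e ∈ D := by
  intro D
  induction D using Finset.strongInduction with
  | _ D ih =>
    intro hDE x w d ρ hbal
    by_cases hex : ∃ e ∈ D, x ∈ e ∧ (e ∈ B ↔ d = true)
    · obtain ⟨e, heD, hxe, hcol⟩ := hex
      obtain ⟨y, rfl⟩ := Sym2.mem_iff_exists.mp hxe
      have hadj : G.Adj x y := (G.mem_edgeSet).mp (hDE _ heD)
      have hxy : x ≠ y := hadj.ne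
      have hss : D.erase s(x,y) ⊂ D := Finset.erase_ssubset heD
      have hcnt : ∀ t c, (cntF B (D.erase s(x,y)) t c : ℤ)
          = cntF B D t c - (if t ∈ (s(x,y) : Sym2 V) ∧ ((s(x,y) : Sym2 V) ∈ B ↔ c = true)
              then 1 else 0) := by
        intro t c
        unfold cntF
        have hfe : (D.erase s(x,y)).filter (fun e => t ∈ e ∧ (e ∈ B ↔ c = true))
            = (D.filter (fun e => t ∈ e ∧ (e ∈ B ↔ c = true))).erase s(x,y) := by
          ext a
          simp only [Finset.mem_filter, Finset.mem_erase]
          tauto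
        rw [hfe]
        by_cases hmem : (t ∈ (s(x,y) : Sym2 V) ∧ ((s(x,y) : Sym2 V) ∈ B ↔ c = true))
        · rw [Finset.card_erase_of_mem (Finset.mem_filter.mpr ⟨heD, hmem⟩), if_pos hmem]
          have hpos : 0 < (D.filter (fun e => t ∈ e ∧ (e ∈ B ↔ c = true))).card :=
            Finset.card_pos.mpr ⟨_, Finset.mem_filter.mpr ⟨heD, hmem⟩⟩
          push_cast
          omega
        · have hnotm : s(x,y) ∉ D.filter (fun e => t ∈ e ∧ (e ∈ B ↔ c = true)) :=
            fun hc => hmem (Finset.mem_filter.mp hc).2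
          rw [Finset.erase_eq_of_notMem hnotm, if_neg hmem]
          push_cast
          ring
      have hrwc : ∀ (t : V) (c : Bool),
          (t ∈ (s(x,y) : Sym2 V) ∧ ((s(x,y) : Sym2 V) ∈ B ↔ c = true)) ↔
          ((t = x ∨ t = y) ∧ d = c) := by
        intro t c
        rw [Sym2.mem_iff]
        cases c <;> cases d <;> simp_all
      have hbal' : ∀ t : V, (cntF B (D.erase s(x,y)) t ρ : ℤ)
          = cntF B (D.erase s(x,y)) t (!ρ) + (if t = w then 1 else 0)
            + (if (!d) = ρ then 1 else -1) * (if t = y then 1 else 0) := by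
        clear ih hDE hss hadj hxe
        intro t
        have h0 := hbal t
        rw [hcnt t ρ, hcnt t (!ρ)]
        simp only [hrwc]
        rcases eq_or_ne t x with rfl | htx
        · cases d <;> cases ρ <;>
            simp [hxy] at h0 ⊢ <;>
            (try split_ifs at h0 ⊢) <;> omega
        · rcases eq_or_ne t y with rfl | hty
          · cases d <;> cases ρ <;>
              simp [htx] at h0 ⊢ <;>
              (try split_ifs at h0 ⊢) <;> omega
          · cases d <;> cases ρ <;>
              simp [htx, hty] at h0 ⊢ <;>
              (try split_ifs at h0 ⊢) <;> omega
      obtain ⟨S', hS', hnd, hsub⟩ := ih _ hss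
        (fun e he => hDE _ (Finset.mem_of_mem_erase he)) y w (!d) ρ hbal'
      rcases hS' with ⟨rfl, rfl, hd'⟩ | hS'
      · have hdρ : d = ρ := Bool.not_inj hd'
        subst hdρ
        refine ⟨[(x,y)], Or.inr (AW.single hadj hcol), by simp, ?_⟩
        intro e' he'
        simp only [sedges_cons, sedges_nil, List.mem_singleton] at he'
        subst he'
        exact heD
      · refine ⟨(x,y) :: S', Or.inr (AW.cons hadj hcol hS'), ?_, ?_⟩
        · simp only [sedges_cons, List.nodup_cons]
          exact ⟨fun hc => (Finset.notMem_erase _ _) (hsub _ hc), hnd⟩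
        · intro e' he'
          simp only [sedges_cons, List.mem_cons] at he'
          rcases he' with rfl | he'
          · exact heD
          · exact Finset.mem_of_mem_erase (hsub _ he')
    · have h0 : cntF B D x d = 0 := by
        unfold cntF
        rw [Finset.card_eq_zero, Finset.filter_eq_empty_iff]
        intro e heD hc
        exact hex ⟨e, heD, hc.1, hc.2⟩
      have hbx := hbal x
      have hkey : x = w ∧ d = !ρ := by
        clear ih hDE hbal
        by_cases hxw : x = w <;> cases d <;> cases ρ <;>
          simp [hxw] at hbx h0 ⊢ <;> omega
      exact ⟨[], Or.inl ⟨rfl, hkey.1, hkey.2⟩, by simp, by simp⟩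


variable {G : SimpleGraph V}

/-- Toggling a `B`-alternating trail with `B`-colored ends in a `b`-factor. -/
lemma factor_of_trail {b : V → ℕ} {Bf : Finset (Sym2 V)}
    (hBf : G.IsBFactor (fun t => (b t : ℤ)) Bf)
    {x y : V} {S : List (V × V)} (h : AW G Bf x y true true S) (hnd : (sedges S).Nodup) :
    ∃ M : Finset (Sym2 V), G.IsBFactor
      (fun t => (b t : ℤ) - (if t = x then 1 else 0) - (if t = y then 1 else 0)) M := by
  classical
  set SF : Finset (Sym2 V) := (sedges S).toFinset with hSF
  refine ⟨(Bf \ SF) ∪ (SF \ Bf), ?_, ?_⟩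
  · intro e he
    simp only [Finset.coe_union, Set.mem_union, Finset.coe_sdiff, Set.mem_diff,
      Finset.mem_coe, Finset.mem_sdiff] at he
    rcases he with he | he
    · exact hBf.1 he.1
    · exact h.edge_mem_edgeSet (List.mem_toFinset.mp he.1)
  · intro t
    set A : Finset (Sym2 V) := Bf.filter (fun e => t ∈ e) with hA
    set C : Finset (Sym2 V) := SF.filter (fun e => t ∈ e) with hC
    have hf1 : ((Bf \ SF) ∪ (SF \ Bf)).filter (fun e => t ∈ e) = (A \ C) ∪ (C \ A) := by
      ext e
      simp only [hA, hC, Finset.mem_filter, Finset.mem_union, Finset.mem_sdiff]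
      tauto
    have hdisj : Disjoint (A \ C) (C \ A) := by
      rw [Finset.disjoint_left]
      intro e he1 he2
      exact (Finset.mem_sdiff.mp he2).2 (Finset.mem_sdiff.mp he1).1
    have hcard : (((Bf \ SF) ∪ (SF \ Bf)).filter (fun e => t ∈ e)).card
        = (A \ C).card + (C \ A).card := by
      rw [hf1, Finset.card_union_of_disjoint hdisj]
    have h1 : (A \ C).card + (A ∩ C).card = A.card := Finset.card_sdiff_add_card_inter A C
    have h2 : (C \ A).card + (C ∩ A).card = C.card := Finset.card_sdiff_add_card_inter C A
    have h3 : (C ∩ A).card = cntL Bf (sedges S) t true := by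
      have : C ∩ A = ((sedges S).filter
          (fun e => decide (t ∈ e ∧ (e ∈ Bf ↔ true = true)))).toFinset := by
        rw [List.toFinset_filter]
        ext e
        simp only [hA, hC, Finset.mem_inter, Finset.mem_filter, List.mem_toFinset,
          decide_eq_true_eq, hSF]
        tauto
      rw [this, cntL, List.toFinset_card_of_nodup (hnd.filter _), List.countP_eq_length_filter]
    have h4 : (C \ A).card = cntL Bf (sedges S) t false := by
      have : C \ A = ((sedges S).filter
          (fun e => decide (t ∈ e ∧ (e ∈ Bf ↔ false = true)))).toFinset := by
        rw [List.toFinset_filter]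
        ext e
        simp only [hA, hC, Finset.mem_sdiff, Finset.mem_filter, List.mem_toFinset,
          decide_eq_true_eq, hSF]
        constructor
        · rintro ⟨⟨he1, he2⟩, he3⟩
          have hnB : e ∉ Bf := fun hB => he3 ⟨hB, he2⟩
          exact ⟨he1, he2, by simpa using hnB⟩
        · rintro ⟨he1, he2, he3⟩
          have hnB : e ∉ Bf := by simpa using he3
          exact ⟨⟨he1, he2⟩, fun hc => hnB hc.1⟩
      rw [this, cntL, List.toFinset_card_of_nodup (hnd.filter _), List.countP_eq_length_filter]
    have hcnt := h.count t
    have hAc : (A.card : ℤ) = b t := hBf.2 t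
    have hic : (A ∩ C).card = (C ∩ A).card := by rw [Finset.inter_comm]
    simp only [if_true] at hcnt
    rw [hcard]
    push_cast
    linarith [hcnt, hAc, h1, h2, h3, h4, hic]

/-- symm-diff count identity. -/
lemma cnt_symmdiff (M1 M2 : Finset (Sym2 V)) (t : V) :
    (cntF M1 ((M1 \ M2) ∪ (M2 \ M1)) t true : ℤ)
      - cntF M1 ((M1 \ M2) ∪ (M2 \ M1)) t false
    = (M1.filter (fun e => t ∈ e)).card - (M2.filter (fun e => t ∈ e)).card := by
  classical
  have e1 : ((M1 \ M2) ∪ (M2 \ M1)).filter (fun e => t ∈ e ∧ (e ∈ M1 ↔ true = true))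
      = (M1 \ M2).filter (fun e => t ∈ e) := by
    ext e
    simp only [Finset.mem_filter, Finset.mem_union, Finset.mem_sdiff]
    tauto
  have e2 : ((M1 \ M2) ∪ (M2 \ M1)).filter (fun e => t ∈ e ∧ (e ∈ M1 ↔ false = true))
      = (M2 \ M1).filter (fun e => t ∈ e) := by
    ext e
    simp only [Finset.mem_filter, Finset.mem_union, Finset.mem_sdiff]
    constructor
    · rintro ⟨h1 | h1, h2, h3⟩
      · exact absurd h1.1 (by simpa using h3)
      · exact ⟨h1, h2⟩
    · rintro ⟨⟨h1, h2⟩, h3⟩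
      exact ⟨Or.inr ⟨h1, h2⟩, h3, by simpa using h2⟩
  have f1 : ((M1 \ M2).filter (fun e => t ∈ e)).card
      + ((M1 ∩ M2).filter (fun e => t ∈ e)).card = (M1.filter (fun e => t ∈ e)).card := by
    rw [← Finset.card_union_of_disjoint, ← Finset.filter_union]
    · congr 1
      rw [Finset.sdiff_union_inter]
    · exact Finset.disjoint_filter_filter
        (Finset.disjoint_left.mpr (fun e he1 he2 =>
          (Finset.mem_sdiff.mp he1).2 (Finset.mem_inter.mp he2).2))
  have f2 : ((M2 \ M1).filter (fun e => t ∈ e)).card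
      + ((M1 ∩ M2).filter (fun e => t ∈ e)).card = (M2.filter (fun e => t ∈ e)).card := by
    rw [← Finset.card_union_of_disjoint, ← Finset.filter_union]
    · congr 1
      rw [Finset.inter_comm, Finset.sdiff_union_inter]
    · exact Finset.disjoint_filter_filter
        (Finset.disjoint_left.mpr (fun e he1 he2 =>
          (Finset.mem_sdiff.mp he1).2 (Finset.mem_inter.mp he2).1))
  unfold cntF
  rw [e1, e2]
  push_cast [← f1, ← f2]
  ring


-- ============ higher-level lemmas ============

lemma AW.exists_snd_end {B : Finset (Sym2 V)} {x y c d S} (h : AW G B x y c d S) :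
    ∃ p ∈ S, p.2 = y := by
  induction h with
  | single hadj hc => exact ⟨_, List.mem_singleton_self _, rfl⟩
  | cons hadj hc h ih =>
      obtain ⟨p, hp, hpe⟩ := ih
      exact ⟨p, List.mem_cons_of_mem _ hp, hpe⟩


lemma cntF_erase (B D : Finset (Sym2 V)) {e : Sym2 V} (he : e ∈ D) (t : V) (c : Bool) :
    (cntF B (D.erase e) t c : ℤ)
      = cntF B D t c - (if t ∈ e ∧ (e ∈ B ↔ c = true) then 1 else 0) := by
  unfold cntF
  have hfe : (D.erase e).filter (fun e' => t ∈ e' ∧ (e' ∈ B ↔ c = true))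
      = (D.filter (fun e' => t ∈ e' ∧ (e' ∈ B ↔ c = true))).erase e := by
    ext a
    simp only [Finset.mem_filter, Finset.mem_erase]
    tauto
  rw [hfe]
  by_cases hmem : (t ∈ e ∧ (e ∈ B ↔ c = true))
  · rw [Finset.card_erase_of_mem (Finset.mem_filter.mpr ⟨he, hmem⟩), if_pos hmem]
    have hpos : 0 < (D.filter (fun e' => t ∈ e' ∧ (e' ∈ B ↔ c = true))).card :=
      Finset.card_pos.mpr ⟨_, Finset.mem_filter.mpr ⟨he, hmem⟩⟩
    push_cast
    omega
  · have hnotm : e ∉ D.filter (fun e' => t ∈ e' ∧ (e' ∈ B ↔ c = true)) :=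
      fun hc => hmem (Finset.mem_filter.mp hc).2
    rw [Finset.erase_eq_of_notMem hnotm, if_neg hmem]
    push_cast
    ring

/-- Every flexible edge lies on a closed alternating trail (w.r.t. any fixed `b`-factor). -/
lemma closed_trail_of_flex {b : V → ℕ} {Bf : Finset (Sym2 V)}
    (hBf : G.IsBFactor (fun t => (b t : ℤ)) Bf) {p q : V} (hadj : G.Adj p q)
    (hflex : G.IsBFlexible b s(p,q)) :
    ∃ (c : Bool) (C : List (V × V)), AW G Bf p p c (!c) C ∧ (sedges C).Nodup ∧ q ∈ tch p C := by
  classical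
  have hpq : p ≠ q := hadj.ne
  by_cases hfB : s(p,q) ∈ Bf
  · obtain ⟨B', hB', hout⟩ := hflex.2
    set D : Finset (Sym2 V) := (Bf \ B') ∪ (B' \ Bf) with hD
    have hfD : s(p,q) ∈ D := by
      rw [hD]
      exact Finset.mem_union.mpr (Or.inl (Finset.mem_sdiff.mpr ⟨hfB, hout⟩))
    have hDE : ∀ e ∈ D.erase s(p,q), e ∈ G.edgeSet := by
      intro e he
      have := Finset.mem_of_mem_erase he
      rw [hD] at this
      rcases Finset.mem_union.mp this with h1 | h1
      · exact hBf.1 (Finset.mem_sdiff.mp h1).1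
      · exact hB'.1 (Finset.mem_sdiff.mp h1).1
    have hbal0 : ∀ t, (cntF Bf D t true : ℤ) = cntF Bf D t false := by
      intro t
      have h1 := cnt_symmdiff Bf B' t
      have h2 : ((Bf.filter (fun e => t ∈ e)).card : ℤ) = (b t : ℤ) := hBf.2 t
      have h3 : ((B'.filter (fun e => t ∈ e)).card : ℤ) = (b t : ℤ) := hB'.2 t
      rw [← hD] at h1
      omega
    have hbal : ∀ t : V, (cntF Bf (D.erase s(p,q)) t false : ℤ)
        = cntF Bf (D.erase s(p,q)) t (!false) + (if t = p then 1 else 0)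
          + (if (false : Bool) = false then 1 else -1) * (if t = q then 1 else 0) := by
      intro t
      rw [cntF_erase Bf D hfD t false, cntF_erase Bf D hfD t (!false)]
      have h0 := hbal0 t
      have htm : t ∈ (s(p,q) : Sym2 V) ↔ (t = p ∨ t = q) := Sym2.mem_iff
      simp only [Bool.not_false, if_true]
      rcases eq_or_ne t p with rfl | htp
      · simp [htm, hfB, hpq]
        omega
      · rcases eq_or_ne t q with rfl | htq
        · simp [htm, hfB, htp]
          omega
        · simp [htm, hfB, htp, htq]
          omega
    obtain ⟨S, hS, hSnd, hSsub⟩ := claimG G Bf (D.erase s(p,q)) hDE q p false false hbal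
    rcases hS with ⟨rfl, rfl, hcon⟩ | hS
    · exact absurd hcon (by simp)
    · refine ⟨true, (p, q) :: S, ?_, ?_, ?_⟩
      · exact AW.cons hadj (by simpa using hfB) (by simpa using hS)
      · simp only [sedges_cons, List.nodup_cons]
        refine ⟨fun hc => ?_, hSnd⟩
        exact (Finset.notMem_erase _ _) (hSsub _ hc)
      · exact mem_tch_of_snd (List.mem_cons_self)
  · obtain ⟨B', hB', hin⟩ := hflex.1
    set D : Finset (Sym2 V) := (Bf \ B') ∪ (B' \ Bf) with hD
    have hfD : s(p,q) ∈ D := by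
      rw [hD]
      exact Finset.mem_union.mpr (Or.inr (Finset.mem_sdiff.mpr ⟨hin, hfB⟩))
    have hDE : ∀ e ∈ D.erase s(p,q), e ∈ G.edgeSet := by
      intro e he
      have := Finset.mem_of_mem_erase he
      rw [hD] at this
      rcases Finset.mem_union.mp this with h1 | h1
      · exact hBf.1 (Finset.mem_sdiff.mp h1).1
      · exact hB'.1 (Finset.mem_sdiff.mp h1).1
    have hbal0 : ∀ t, (cntF Bf D t true : ℤ) = cntF Bf D t false := by
      intro t
      have h1 := cnt_symmdiff Bf B' t
      have h2 : ((Bf.filter (fun e => t ∈ e)).card : ℤ) = (b t : ℤ) := hBf.2 t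
      have h3 : ((B'.filter (fun e => t ∈ e)).card : ℤ) = (b t : ℤ) := hB'.2 t
      rw [← hD] at h1
      omega
    have hbal : ∀ t : V, (cntF Bf (D.erase s(p,q)) t true : ℤ)
        = cntF Bf (D.erase s(p,q)) t (!true) + (if t = p then 1 else 0)
          + (if (true : Bool) = true then 1 else -1) * (if t = q then 1 else 0) := by
      intro t
      rw [cntF_erase Bf D hfD t true, cntF_erase Bf D hfD t (!true)]
      have h0 := hbal0 t
      have htm : t ∈ (s(p,q) : Sym2 V) ↔ (t = p ∨ t = q) := Sym2.mem_iff
      simp only [Bool.not_true, if_true]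
      rcases eq_or_ne t p with rfl | htp
      · simp [htm, hfB, hpq]
        omega
      · rcases eq_or_ne t q with rfl | htq
        · simp [htm, hfB, htp]
          omega
        · simp [htm, hfB, htp, htq]
          omega
    obtain ⟨S, hS, hSnd, hSsub⟩ := claimG G Bf (D.erase s(p,q)) hDE q p true true hbal
    rcases hS with ⟨rfl, rfl, hcon⟩ | hS
    · exact absurd hcon (by simp)
    · refine ⟨false, (p, q) :: S, ?_, ?_, ?_⟩
      · exact AW.cons hadj (by simpa using hfB) (by simpa using hS)
      · simp only [sedges_cons, List.nodup_cons]
        refine ⟨fun hc => ?_, hSnd⟩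
        exact (Finset.notMem_erase _ _) (hSsub _ hc)
      · exact mem_tch_of_snd (List.mem_cons_self)

/-- The open alternating trail between the two defect vertices. -/
lemma open_trail {b : V → ℕ} {Bf F : Finset (Sym2 V)} {u w : V}
    (hBf : G.IsBFactor (fun t => (b t : ℤ)) Bf)
    (hF : G.IsBFactor
      (fun t => (b t : ℤ) - (if t = u then 1 else 0) - (if t = w then 1 else 0)) F) :
    ∃ T, AW G Bf u w true true T ∧ (sedges T).Nodup := by
  classical
  set D : Finset (Sym2 V) := (Bf \ F) ∪ (F \ Bf) with hD
  have hDE : ∀ e ∈ D, e ∈ G.edgeSet := by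
    intro e he
    rw [hD] at he
    rcases Finset.mem_union.mp he with h1 | h1
    · exact hBf.1 (Finset.mem_sdiff.mp h1).1
    · exact hF.1 (Finset.mem_sdiff.mp h1).1
  have hbal : ∀ t : V, (cntF Bf D t true : ℤ)
      = cntF Bf D t (!true) + (if t = w then 1 else 0)
        + (if (true : Bool) = true then 1 else -1) * (if t = u then 1 else 0) := by
    intro t
    have h1 := cnt_symmdiff Bf F t
    have h2 : ((Bf.filter (fun e => t ∈ e)).card : ℤ) = (b t : ℤ) := hBf.2 t
    have h3 : ((F.filter (fun e => t ∈ e)).card : ℤ)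
        = (b t : ℤ) - (if t = u then 1 else 0) - (if t = w then 1 else 0) := hF.2 t
    rw [← hD] at h1
    simp only [Bool.not_true, if_true]
    split_ifs at h3 ⊢ <;> omega
  obtain ⟨S, hS, hSnd, hSsub⟩ := claimG G Bf D hDE u w true true hbal
  rcases hS with ⟨rfl, rfl, hcon⟩ | hS
  · exact absurd hcon (by simp)
  · exact ⟨S, hS, hSnd⟩

lemma AW.exists_snd_end' {B : Finset (Sym2 V)} {x y : V} {c d : Bool} {S : List (V × V)}
    (h : AW G B x y c d S) : ∃ p ∈ S, p.2 = y := by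
  induction h with
  | single hadj hc => exact ⟨_, List.mem_singleton_self _, rfl⟩
  | cons hadj hc h ih =>
      obtain ⟨p, hp, hpe⟩ := ih
      exact ⟨p, List.mem_cons_of_mem _ hp, hpe⟩

lemma tch_mem_rotate {B : Finset (Sym2 V)} {x s : V} {c β γ : Bool} {C R : List (V × V)}
    (hC : AW G B x x c (!c) C) (hR : AW G B s s β γ R)
    (hCR : ∀ p ∈ C, p ∈ R ∨ p.swap ∈ R) {t : V} (ht : t ∈ tch x C) : t ∈ tch s R := by
  have hsnd : ∃ p ∈ C, p.2 = t := by
    simp only [tch, List.mem_cons, List.mem_map] at ht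
    rcases ht with rfl | ⟨p, hp, hpe⟩
    · exact hC.exists_snd_end'
    · exact ⟨p, hp, hpe⟩
  obtain ⟨p, hp, rfl⟩ := hsnd
  rcases hCR p hp with h1 | h1
  · exact mem_tch_of_snd h1
  · have := hR.fst_mem_tch h1
    simpa using this

lemma mem_tch_of_edge {B : Finset (Sym2 V)} {x y : V} {c d : Bool} {C : List (V × V)}
    (hC : AW G B x y c d C) {pr : V × V} (hpr : pr ∈ C ∨ pr.swap ∈ C)
    {t : V} (ht : t ∈ s(pr.1, pr.2)) : t ∈ tch x C := by
  rcases hpr with hpr | hpr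
  · rcases Sym2.mem_iff.mp ht with rfl | rfl
    · exact hC.fst_mem_tch hpr
    · exact mem_tch_of_snd hpr
  · rcases Sym2.mem_iff.mp ht with rfl | rfl
    · exact mem_tch_of_snd hpr
    · exact hC.fst_mem_tch hpr

/-- One step of the walk induction: extend the trail invariant across a flexible edge. -/
lemma step {B : Finset (Sym2 V)} {v x y : V} {X : List (V × V)} {dX : Bool}
    (hX : (X = [] ∧ x = v) ∨ AW G B v x true dX X) (hnd : (sedges X).Nodup)
    {c : Bool} {C : List (V × V)} (hC : AW G B x x c (!c) C) (hCnd : (sedges C).Nodup)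
    (hyC : y ∈ tch x C) (hyv : y ≠ v) :
    ∃ X' dX', AW G B v y true dX' X' ∧ (sedges X').Nodup := by
  classical
  have build : ∀ (hvC : v ∈ tch x C),
      ∃ X' dX', AW G B v y true dX' X' ∧ (sedges X').Nodup := by
    intro hvC
    obtain ⟨R, hR, hRperm, hRmem, hCRmem⟩ := hC.rotate hvC true
    have hyR : y ∈ tch v R := tch_mem_rotate hC hR hCRmem hyC
    obtain ⟨R1, R2, d2, hReq, hpre, hsuf⟩ := hR.split hyR
    rcases hpre with ⟨-, rfl, -⟩ | hpre
    · exact absurd rfl hyv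
    · refine ⟨R1, d2, hpre, ?_⟩
      have hndR : (sedges R).Nodup := (hRperm.nodup_iff).mpr hCnd
      have hsubR : (sedges R1).Sublist (sedges R) := by
        rw [hReq]
        simp only [sedges_append]
        exact List.sublist_append_left _ _
      exact hsubR.nodup hndR
  rcases hX with ⟨rfl, rfl⟩ | hX
  · exact build (List.mem_cons_self)
  · have hex : ∃ t ∈ tch v X, t ∈ tch x C := ⟨x, hX.end_mem_tch, List.mem_cons_self⟩
    obtain ⟨s, S1, hAs, hfst, hsub, hpre⟩ := hX.firsthit (fun t => t ∈ tch x C) hex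
    rcases hpre with ⟨rfl, rfl⟩ | ⟨d1, hS1⟩
    · exact build hAs
    · obtain ⟨R, hR, hRperm, hRmem, hCRmem⟩ := hC.rotate hAs (!d1)
      have hyR : y ∈ tch s R := tch_mem_rotate hC hR hCRmem hyC
      obtain ⟨R1, R2, d2, hReq, hpre2, hsuf2⟩ := hR.split hyR
      have hndR : (sedges R).Nodup := hRperm.nodup_iff.mpr hCnd
      have hR1sub : (sedges R1).Sublist (sedges R) := by
        rw [hReq]
        simp only [sedges_append]
        exact List.sublist_append_left _ _
      have hndS1 : (sedges S1).Nodup := hsub.nodup hnd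
      rcases hpre2 with ⟨rfl, rfl, -⟩ | hpre2
      · exact ⟨S1, d1, hS1, hndS1⟩
      · refine ⟨S1 ++ R1, d2, hS1.append hpre2, ?_⟩
        rw [sedges_append]
        refine (List.nodup_append').mpr ⟨hndS1, hR1sub.nodup hndR, ?_⟩
        intro e he1 he2
        obtain ⟨p, hp, rfl⟩ := List.mem_map.mp he1
        have heR : s(p.1, p.2) ∈ sedges R := hR1sub.subset he2
        obtain ⟨pr, hpr, hpe⟩ := List.mem_map.mp heR
        have hin : p.1 ∈ tch x C := by
          apply mem_tch_of_edge hC (hRmem pr hpr)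
          rw [hpe]
          exact Sym2.mem_iff.mpr (Or.inl rfl)
        exact hfst p hp hin

/-- Walk induction: build an alternating trail from `v` following a flexible path. -/
lemma lemW {b : V → ℕ} {Bf : Finset (Sym2 V)}
    (hBf : G.IsBFactor (fun t => (b t : ℤ)) Bf) {v w' : V} :
    ∀ {x : V} (q : G.Walk x w'), (∀ e ∈ q.edges, G.IsBFlexible b e) →
      v ∉ q.support.tail →
      ∀ (X : List (V × V)) (dX : Bool),
        ((X = [] ∧ x = v) ∨ AW G Bf v x true dX X) → (sedges X).Nodup →
        ∃ S d', ((S = [] ∧ w' = v) ∨ AW G Bf v w' true d' S) ∧ (sedges S).Nodup := by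
  intro x q
  induction q with
  | nil =>
      intro _ _ X dX hX hnd
      refine ⟨X, dX, ?_, hnd⟩
      rcases hX with ⟨h1, h2⟩ | h3
      · exact Or.inl ⟨h1, h2.symm ▸ rfl⟩
      · exact Or.inr h3
  | @cons x' y' w'' hadj q' ih =>
      intro hflex hv X dX hX hnd
      have hfe : G.IsBFlexible b s(x', y') := hflex _ (by simp)
      have hv' : v ∉ q'.support := by
        rwa [SimpleGraph.Walk.support_cons, List.tail_cons] at hv
      have hyv : y' ≠ v := fun h => hv' (h ▸ q'.start_mem_support)
      obtain ⟨c, C, hC, hCnd, hyC⟩ := closed_trail_of_flex hBf hadj hfe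
      obtain ⟨X', dX', hX', hnd'⟩ := step hX hnd hC hCnd hyC hyv
      exact ih (fun e he => hflex e (by simp [he]))
        (fun hm => hv' (List.mem_of_mem_tail hm)) X' dX' (Or.inr hX') hnd'

/-- Final splice: combine the trail from `v` with the open `u`–`w` trail. -/
lemma finish {b : V → ℕ} {Bf : Finset (Sym2 V)}
    (hBf : G.IsBFactor (fun t => (b t : ℤ)) Bf) {u v w : V}
    {T Q : List (V × V)} {dQ : Bool}
    (hT : AW G Bf u w true true T) (hTnd : (sedges T).Nodup)
    (hQ : AW G Bf v w true dQ Q) (hQnd : (sedges Q).Nodup)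
    (hvu : v ≠ u) (hvw : v ≠ w) :
    (∃ M, G.IsBFactor
      (fun t => (b t : ℤ) - (if t = v then 1 else 0) - (if t = u then 1 else 0)) M)
    ∨ (∃ M, G.IsBFactor
      (fun t => (b t : ℤ) - (if t = v then 1 else 0) - (if t = w then 1 else 0)) M) := by
  classical
  obtain ⟨s, S1, hAs, hfst, hsub, hpre⟩ := hQ.firsthit (fun t => t ∈ tch u T)
      ⟨w, hQ.end_mem_tch, hT.end_mem_tch⟩
  obtain ⟨T1, T2, dd, hTeq, hpreT, hsufT⟩ := hT.split hAs
  have hndT : ((sedges T1) ++ (sedges T2)).Nodup := by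
    rw [← sedges_append, ← hTeq]; exact hTnd
  have hndT1 : (sedges T1).Nodup := (List.nodup_append'.mp hndT).1
  have hndT2 : (sedges T2).Nodup := (List.nodup_append'.mp hndT).2.1
  have hT2T : ∀ e ∈ sedges T2, e ∈ sedges T := by
    intro e he
    rw [hTeq, sedges_append]
    exact List.mem_append_right _ he
  have hT1T : ∀ e ∈ sedges (BProof.revP T1), e ∈ sedges T := by
    intro e he
    rw [sedges_revP, List.mem_reverse] at he
    rw [hTeq, sedges_append]
    exact List.mem_append_left _ he
  have hndT1r : (sedges (BProof.revP T1)).Nodup := by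
    rw [sedges_revP]
    exact List.nodup_reverse.mpr hndT1
  rcases hpre with ⟨rfl, rfl⟩ | ⟨d1, hS1⟩
  · -- v lies on T itself
    rcases hpreT with ⟨-, hvu', -⟩ | hT1
    · exact absurd hvu' hvu
    · rcases hsufT with ⟨-, hvw', -⟩ | hT2
      · exact absurd hvw' hvw
      · by_cases hdd : dd = true
        · subst hdd
          refine Or.inl (factor_of_trail hBf hT1.revP hndT1r)
        · have hdd' : dd = false := by cases dd; rfl; exact absurd rfl hdd
          subst hdd'
          exact Or.inr (factor_of_trail hBf (by simpa using hT2) hndT2)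
  · have hndS1 : (sedges S1).Nodup := hsub.nodup hQnd
    have mkS : ∀ {z : V} {S2 : List (V × V)}, AW G Bf s z (!d1) true S2 →
        (∀ e ∈ sedges S2, e ∈ sedges T) → (sedges S2).Nodup →
        ∃ S, AW G Bf v z true true S ∧ (sedges S).Nodup := by
      intro z S2 h2 h2T h2nd
      refine ⟨S1 ++ S2, hS1.append h2, ?_⟩
      rw [sedges_append]
      refine List.nodup_append'.mpr ⟨hndS1, h2nd, ?_⟩
      intro e he1 he2
      obtain ⟨p, hp, rfl⟩ := List.mem_map.mp he1
      have : p.1 ∈ tch u T := hT.mem_of_edge_mem (h2T _ he2) (Sym2.mem_iff.mpr (Or.inl rfl))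
      exact hfst p hp this
    by_cases hstop : d1 = true ∧ (s = u ∨ s = w)
    · obtain ⟨rfl, hsu⟩ := hstop
      rcases hsu with rfl | rfl
      · exact Or.inl (factor_of_trail hBf hS1 hndS1)
      · exact Or.inr (factor_of_trail hBf hS1 hndS1)
    · rcases hpreT with ⟨rfl, rfl, rfl⟩ | hT1
      · -- T1 = [], s = u, dd = !true
        have hd1 : d1 = false := by
          cases d1
          · rfl
          · exact absurd ⟨rfl, Or.inl rfl⟩ hstop
        subst hd1
        rcases hsufT with ⟨h2e, -, -⟩ | hT2
        · exact absurd (by simpa [h2e] using hTeq) hT.ne_nil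
        · obtain ⟨S, hS, hSnd⟩ := mkS (by simpa using hT2) hT2T hndT2
          exact Or.inr (factor_of_trail hBf hS hSnd)
      · rcases hsufT with ⟨rfl, rfl, rfl⟩ | hT2
        · -- T2 = [], s = w, dd = true
          have hd1 : d1 = false := by
            cases d1
            · rfl
            · exact absurd ⟨rfl, Or.inr rfl⟩ hstop
          subst hd1
          obtain ⟨S, hS, hSnd⟩ := mkS (by simpa using hT1.revP) hT1T hndT1r
          exact Or.inl (factor_of_trail hBf hS hSnd)
        · by_cases hddd : dd = d1
          · subst hddd
            obtain ⟨S, hS, hSnd⟩ := mkS hT2 hT2T hndT2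
            exact Or.inr (factor_of_trail hBf hS hSnd)
          · have hdd' : dd = !d1 := by
              cases dd <;> cases d1 <;> simp_all
            subst hdd'
            obtain ⟨S, hS, hSnd⟩ := mkS (by simpa using hT1.revP) hT1T hndT1r
            exact Or.inl (factor_of_trail hBf hS hSnd)

end BProof

/-- For a `b`-factorizable graph `G`, the relation `∼_{b,-}` is an
equivalence relation on `V(G)`. -/
theorem bSimMinus_equivalence (G : SimpleGraph V) (b : V → ℕ)
    (hG : ∃ M, G.IsBFactor (fun w => (b w : ℤ)) M) :
    Equivalence (G.BSimMinus b) := by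
  classical
  obtain ⟨Bf, hBf⟩ := hG
  have conn_symm : ∀ {a c : V}, G.BFlexConn b a c → G.BFlexConn b c a := by
    rintro a c ⟨p, hp, hf⟩
    exact ⟨p.reverse, hp.reverse, fun e he => hf e
      (by rwa [SimpleGraph.Walk.edges_reverse, List.mem_reverse] at he)⟩
  have fac_comm : ∀ {a c : V}, (∃ M, G.IsBFactor
        (fun t => (b t : ℤ) - (if t = a then 1 else 0) - (if t = c then 1 else 0)) M) →
      (∃ M, G.IsBFactor
        (fun t => (b t : ℤ) - (if t = c then 1 else 0) - (if t = a then 1 else 0)) M) := by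
    rintro a c ⟨M, hM⟩
    exact ⟨M, hM.1, fun t => (hM.2 t).trans (by ring)⟩
  constructor
  · intro a
    exact Or.inl rfl
  · intro a c h
    rcases h with rfl | ⟨hcon, hne⟩
    · exact Or.inl rfl
    · exact Or.inr ⟨conn_symm hcon, fun hex => hne (fac_comm hex)⟩
  · intro u0 v0 w0 h1 h2
    by_cases huv : u0 = v0
    · subst huv
      rcases h1 with - | ⟨-, hne1⟩
      · exact h2
      · exact h2
    by_cases hvw : v0 = w0
    · subst hvw
      exact h1
    rcases h1 with rfl | ⟨hcon1, hne1⟩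
    · exact absurd rfl huv
    rcases h2 with rfl | ⟨hcon2, hne2⟩
    · exact absurd rfl hvw
    by_cases huw : u0 = w0
    · exact Or.inl huw
    refine Or.inr ⟨?_, ?_⟩
    · obtain ⟨p1, hp1, hf1⟩ := hcon1
      obtain ⟨p2, hp2, hf2⟩ := hcon2
      refine ⟨(p1.append p2).bypass, SimpleGraph.Walk.bypass_isPath _, ?_⟩
      intro ed hed
      have hed' := SimpleGraph.Walk.edges_bypass_subset _ hed
      rw [SimpleGraph.Walk.edges_append] at hed'
      rcases List.mem_append.mp hed' with h | h
      · exact hf1 _ h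
      · exact hf2 _ h
    · rintro ⟨F, hF⟩
      obtain ⟨T, hTaw, hTnd⟩ := BProof.open_trail hBf hF
      obtain ⟨q, hq, hqf⟩ := hcon2
      have hvt : v0 ∉ q.support.tail := by
        have hnd := hq.support_nodup
        rw [SimpleGraph.Walk.support_eq_cons] at hnd
        exact (List.nodup_cons.mp hnd).1
      obtain ⟨SQ, dQ, hSQ, hSQnd⟩ := BProof.lemW hBf q hqf hvt [] true
        (Or.inl ⟨rfl, rfl⟩) (by simp)
      rcases hSQ with ⟨-, hce⟩ | hSQ
      · exact hvw hce.symm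
      rcases BProof.finish hBf hTaw hTnd hSQ hSQnd (fun h => huv h.symm) hvw with
        ⟨M, hM⟩ | ⟨M, hM⟩
      · exact hne1 ⟨M, hM.1, fun t => (hM.2 t).trans (by ring)⟩
      · exact hne2 ⟨M, hM⟩
end
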